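/- arXiv:1807.00204 — 8 statements merged into one kernel-verified Lean document; each statement's English description precedes it below -/
import Mathlib

section
/- The function g(x) = x·M(x)^{2/x} is strictly convex on (0,∞). -/
/-- The function `g(x) = x·M(x)^{2/x}` is strictly convex on `(0,∞)`.  Here
`M : (0,∞) → (0,∞)` is `C²` with `(log M)'' > 0` (so `log M` is strictly convex),
`J(x) = M(x)^{1/x}`, and `J` is unbounded on `(0,∞)`. -/
theorem strictConvexOn_g (M J g : ℝ → ℝ)
    (hMpos : ∀ x > (0 : ℝ), 0 < M x)
    (hMsmooth : ContDiffOn ℝ 2 M (Set.Ioi 0))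
    (hlogconv : ∀ x > (0 : ℝ), 0 < deriv (deriv (fun y => Real.log (M y))) x)
    (hJ : ∀ x > (0 : ℝ), J x = M x ^ (1 / x))
    (hJunb : ∀ B : ℝ, ∃ x > (0 : ℝ), B < J x)
    (hg : ∀ x > (0 : ℝ), g x = x * M x ^ (2 / x)) :
    StrictConvexOn ℝ (Set.Ioi 0) g := by
  have hopen : IsOpen (Set.Ioi (0:ℝ)) := isOpen_Ioi
  set L : ℝ → ℝ := fun y => Real.log (M y) with hLdef
  have hLC : ContDiffOn ℝ 2 L (Set.Ioi 0) :=
    hMsmooth.log (fun x hx => (hMpos x hx).ne')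
  have hL1 : DifferentiableOn ℝ L (Set.Ioi 0) := hLC.differentiableOn (by norm_num)
  have hL'C : ContDiffOn ℝ 1 (deriv L) (Set.Ioi 0) :=
    hLC.deriv_of_isOpen hopen (by norm_num)
  have hL'1 : DifferentiableOn ℝ (deriv L) (Set.Ioi 0) := hL'C.differentiableOn (by norm_num)
  have hLd : ∀ x ∈ Set.Ioi (0:ℝ), HasDerivAt L (deriv L x) x := fun x hx =>
    ((hL1 x hx).differentiableAt (hopen.mem_nhds hx)).hasDerivAt
  have hL'd : ∀ x ∈ Set.Ioi (0:ℝ), HasDerivAt (deriv L) (deriv (deriv L) x) x := fun x hx =>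
    ((hL'1 x hx).differentiableAt (hopen.mem_nhds hx)).hasDerivAt
  set G : ℝ → ℝ := fun x => x * Real.exp (2 * L x / x) with hGdef
  have hgG : Set.EqOn g G (Set.Ioi 0) := by
    intro x hx
    have hx0 : (0:ℝ) < x := hx
    rw [hg x hx0, Real.rpow_def_of_pos (hMpos x hx0)]
    simp only [hGdef, hLdef]
    ring_nf
  -- derivative of the inner function u(y) = 2 L y / y
  have hu : ∀ x ∈ Set.Ioi (0:ℝ),
      HasDerivAt (fun y => 2 * L y / y) ((2 * deriv L x * x - 2 * L x) / x ^ 2) x := by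
    intro x hx
    have h := ((hLd x hx).const_mul 2).div (hasDerivAt_id x) (ne_of_gt hx)
    convert h using 1
    · rfl
    · rfl
    · rfl
    · simp [id]
  set F : ℝ → ℝ := fun y =>
    Real.exp (2 * L y / y) * (1 + y * ((2 * deriv L y * y - 2 * L y) / y ^ 2)) with hFdef
  have hG1 : ∀ x ∈ Set.Ioi (0:ℝ), HasDerivAt G (F x) x := by
    intro x hx
    have h := (hasDerivAt_id x).mul (hu x hx).exp
    convert h using 1
    · rfl
    · rfl
    · rfl
    · simp only [hFdef, id]
      ring
  have hderivG : ∀ x ∈ Set.Ioi (0:ℝ), deriv G x = F x := fun x hx => (hG1 x hx).deriv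
  -- derivative of F
  have hF : ∀ x ∈ Set.Ioi (0:ℝ), ∃ c : ℝ, HasDerivAt F c x ∧ 0 < c := by
    intro x hx
    have hx0 : (0:ℝ) < x := hx
    have hxne : x ≠ 0 := ne_of_gt hx0
    -- derivative of numerator n(y) = 2 * L' y * y - 2 * L y
    have hn : HasDerivAt (fun y => 2 * deriv L y * y - 2 * L y)
        ((2 * deriv (deriv L) x * x + 2 * deriv L x) - 2 * deriv L x) x := by
      have h1 := (((hL'd x hx).const_mul 2).mul (hasDerivAt_id x))
      have h2 := (hLd x hx).const_mul 2
      convert h1.sub h2 using 1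
      · rfl
      · rfl
      · rfl
      · simp [id]
    have hpow : HasDerivAt (fun y : ℝ => y ^ 2) (2 * x) x := by
      simpa using hasDerivAt_pow 2 x
    have hv : HasDerivAt (fun y => (2 * deriv L y * y - 2 * L y) / y ^ 2)
        ((((2 * deriv (deriv L) x * x + 2 * deriv L x) - 2 * deriv L x) * x ^ 2
          - (2 * deriv L x * x - 2 * L x) * (2 * x)) / (x ^ 2) ^ 2) x :=
      hn.div hpow (pow_ne_zero 2 hxne)
    have hw : HasDerivAt (fun y => 1 + y * ((2 * deriv L y * y - 2 * L y) / y ^ 2))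
        (1 * ((2 * deriv L x * x - 2 * L x) / x ^ 2)
          + x * ((((2 * deriv (deriv L) x * x + 2 * deriv L x) - 2 * deriv L x) * x ^ 2
          - (2 * deriv L x * x - 2 * L x) * (2 * x)) / (x ^ 2) ^ 2)) x := by
      simpa [Pi.add_def, Pi.mul_def] using (hasDerivAt_const x (1:ℝ)).add ((hasDerivAt_id x).mul hv)
    have hFd := ((hu x hx).exp).mul hw
    refine ⟨_, hFd, ?_⟩
    have key : (Real.exp (2 * L x / x) * ((2 * deriv L x * x - 2 * L x) / x ^ 2)) *
          (1 + x * ((2 * deriv L x * x - 2 * L x) / x ^ 2))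
        + Real.exp (2 * L x / x) *
          (1 * ((2 * deriv L x * x - 2 * L x) / x ^ 2)
          + x * ((((2 * deriv (deriv L) x * x + 2 * deriv L x) - 2 * deriv L x) * x ^ 2
          - (2 * deriv L x * x - 2 * L x) * (2 * x)) / (x ^ 2) ^ 2))
        = Real.exp (2 * L x / x) *
            (2 * deriv (deriv L) x + (2 * deriv L x * x - 2 * L x) ^ 2 / x ^ 3) := by
      field_simp
      ring
    rw [key]
    have hL'' : 0 < deriv (deriv L) x := hlogconv x hx0
    have h1 : (0:ℝ) ≤ (2 * deriv L x * x - 2 * L x) ^ 2 / x ^ 3 :=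
      div_nonneg (sq_nonneg _) (by positivity)
    have := Real.exp_pos (2 * L x / x)
    positivity
  -- continuity of g on Ioi 0
  have hGcont : ContinuousOn G (Set.Ioi 0) := by
    apply continuousOn_id.mul
    exact (((continuousOn_const.mul hLC.continuousOn).div continuousOn_id
      (fun x hx => ne_of_gt hx)).rexp)
  have hgcont : ContinuousOn g (Set.Ioi 0) := hGcont.congr hgG
  apply strictConvexOn_of_deriv2_pos (convex_Ioi 0) hgcont
  intro x hx
  rw [interior_Ioi] at hx
  obtain ⟨c, hc, hcpos⟩ := hF x hx
  have hderiv_g_eq : ∀ y ∈ Set.Ioi (0:ℝ), deriv g y = F y := by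
    intro y hy
    have : g =ᶠ[nhds y] G := Filter.eventuallyEq_of_mem (hopen.mem_nhds hy) hgG
    rw [this.deriv_eq, hderivG y hy]
  have h2 : deriv (deriv g) x = c := by
    have : deriv g =ᶠ[nhds x] F := Filter.eventuallyEq_of_mem (hopen.mem_nhds hx) hderiv_g_eq
    rw [this.deriv_eq, hc.deriv]
  simpa [Function.iterate_succ, h2] using hcpos
end

section
/- The function g is strictly increasing on [x₀,∞); denoting by g⁻¹ the inverse of its restriction to [x₀,∞) (defined on [g(x₀),∞)), for every y ≥ 1 and every k ≥ g(x₀) one has (1/y)·g⁻¹(k·y) ≤ g⁻¹(2k). -/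
/-- The function `g` is strictly increasing on `[x₀,∞)`; denoting by `g⁻¹` the inverse of
its restriction to `[x₀,∞)` (defined on `[g(x₀),∞)`), for every `y ≥ 1` and every
`k ≥ g(x₀)` one has `(1/y)·g⁻¹(k·y) ≤ g⁻¹(2k)`.  Here `M : (0,∞) → (0,∞)` is `C²` with
`(log M)'' > 0`, `J(x) = M(x)^{1/x}` is unbounded, `g(x) = x·M(x)^{2/x}`, and `x₀ > 0`
is such that `J' > 0` on `(x₀,∞)`. -/
theorem strictMonoOn_g_and_inverse_scaling (M J g : ℝ → ℝ)
    (hMpos : ∀ x > (0 : ℝ), 0 < M x)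
    (hMsmooth : ContDiffOn ℝ 2 M (Set.Ioi 0))
    (hlogconv : ∀ x > (0 : ℝ), 0 < deriv (deriv (fun y => Real.log (M y))) x)
    (hJ : ∀ x > (0 : ℝ), J x = M x ^ (1 / x))
    (hJunb : ∀ B : ℝ, ∃ x > (0 : ℝ), B < J x)
    (hg : ∀ x > (0 : ℝ), g x = x * M x ^ (2 / x))
    (x₀ : ℝ) (hx₀ : 0 < x₀) (hJ' : ∀ x > x₀, 0 < deriv J x)
    (ginv : ℝ → ℝ)
    (hginv_left : ∀ x ∈ Set.Ici x₀, ginv (g x) = x)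
    (hginv_right : ∀ y ∈ Set.Ici (g x₀), ginv y ∈ Set.Ici x₀ ∧ g (ginv y) = y) :
    StrictMonoOn g (Set.Ici x₀) ∧
    ∀ y ≥ (1 : ℝ), ∀ k ≥ g x₀, (1 / y) * ginv (k * y) ≤ ginv (2 * k) := by
  have hsub : Set.Ici x₀ ⊆ Set.Ioi 0 := fun x hx => lt_of_lt_of_le hx₀ hx
  have hJval : ∀ x ∈ Set.Ici x₀, J x = M x ^ (1 / x) := fun x hx => hJ x (hsub hx)
  have hJpos : ∀ x ∈ Set.Ici x₀, 0 < J x := by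
    intro x hx
    rw [hJval x hx]
    exact Real.rpow_pos_of_pos (hMpos x (hsub hx)) _
  have hJcont : ContinuousOn J (Set.Ici x₀) := by
    have hMc : ContinuousOn M (Set.Ici x₀) := hMsmooth.continuousOn.mono hsub
    have hc : ContinuousOn (fun x => M x ^ (1 / x)) (Set.Ici x₀) := by
      apply ContinuousOn.rpow hMc
        (continuousOn_const.div continuousOn_id (fun x hx => ne_of_gt (hsub hx)))
      intro x hx
      exact Or.inl (ne_of_gt (hMpos x (hsub hx)))
    exact hc.congr hJval
  have hJmono : StrictMonoOn J (Set.Ici x₀) := by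
    apply strictMonoOn_of_deriv_pos (convex_Ici x₀) hJcont
    intro x hx
    rw [interior_Ici] at hx
    exact hJ' x hx
  have hgval : ∀ x ∈ Set.Ici x₀, g x = x * (J x * J x) := by
    intro x hx
    have hxpos : 0 < x := hsub hx
    rw [hg x hxpos, hJval x hx, show (2:ℝ)/x = 1/x + 1/x by ring,
      Real.rpow_add (hMpos x hxpos)]
  have hgmono : StrictMonoOn g (Set.Ici x₀) := by
    intro a ha b hb hab
    rw [hgval a ha, hgval b hb]
    have hJa := hJpos a ha
    have hJab := hJmono ha hb hab
    have hsq : J a * J a < J b * J b := mul_lt_mul'' hJab hJab hJa.le hJa.le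
    exact mul_lt_mul'' hab hsq (hsub ha).le (mul_pos hJa hJa).le
  refine ⟨hgmono, ?_⟩
  intro y hy k hk
  have hy0 : (0:ℝ) < y := lt_of_lt_of_le one_pos hy
  have hgx₀pos : 0 < g x₀ := by
    rw [hg x₀ hx₀]
    exact mul_pos hx₀ (Real.rpow_pos_of_pos (hMpos x₀ hx₀) _)
  have hk0 : 0 < k := lt_of_lt_of_le hgx₀pos hk
  have hky : k * y ∈ Set.Ici (g x₀) :=
    le_trans hk (le_mul_of_one_le_right hk0.le hy)
  have h2k : (2:ℝ) * k ∈ Set.Ici (g x₀) := le_trans hk (by linarith)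
  obtain ⟨ha_mem, hga⟩ := hginv_right (k * y) hky
  obtain ⟨hb_mem, hgb⟩ := hginv_right (2 * k) h2k
  set a := ginv (k * y) with ha_def
  set b := ginv (2 * k) with hb_def
  have hapos : 0 < a := hsub ha_mem
  rw [one_div_mul_eq_div]
  by_cases hcase : a / y ≤ x₀
  · exact le_trans hcase hb_mem
  · push_neg at hcase
    have hay_mem : a / y ∈ Set.Ici x₀ := le_of_lt hcase
    have haya : a / y ≤ a := div_le_self hapos.le hy
    have hJle : J (a / y) ≤ J a := hJmono.monotoneOn hay_mem ha_mem haya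
    have hgay : g (a / y) ≤ k := by
      rw [hgval _ hay_mem]
      have h1 : J (a / y) * J (a / y) ≤ J a * J a :=
        mul_le_mul hJle hJle (hJpos _ hay_mem).le (hJpos _ ha_mem).le
      have h2 : (a / y) * (J (a / y) * J (a / y)) ≤ (a / y) * (J a * J a) := by
        apply mul_le_mul_of_nonneg_left h1
        positivity
      have h3 : a * (J a * J a) = k * y := by rw [← hgval a ha_mem]; exact hga
      have h4 : (a / y) * (J a * J a) = k := by
        field_simp
        linarith [h3]
      linarith
    have hgb' : g (a / y) ≤ g b := by rw [hgb]; linarith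
    by_contra hlt
    push_neg at hlt
    have := hgmono hb_mem hay_mem hlt
    linarith
end

section
/- Let ε₁ ∈ (0,1). There exists a constant C(ε₁) > 0 depending only on ε₁ (for instance C(ε₁) = (4/ε₁²)·max{1, log(1/ε₁)}) such that for every k > x₀²·J(x₀)·J'(x₀)·e^{2·x₀·J'(x₀)/J(x₀)} with k ≥ 2·g(x₀)·log(1/ε₁)/ε₁²: if the critical point ε(k) of h satisfies ε(k) > ε₁, then h(ε₁) ≤ h(ε(k)) ≤ C(ε₁)·h(ε₁). -/
open Real Set

noncomputable def Gd (M : ℝ → ℝ) : ℝ → ℝ := deriv (fun y => Real.log (M y))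
noncomputable def Gdd (M : ℝ → ℝ) : ℝ → ℝ := deriv (Gd M)
noncomputable def qq (M : ℝ → ℝ) : ℝ → ℝ := fun x => Real.log (M x) / x
noncomputable def q1 (M : ℝ → ℝ) : ℝ → ℝ := fun x => Gd M x / x - Real.log (M x) / x ^ 2
noncomputable def q2 (M : ℝ → ℝ) : ℝ → ℝ :=
  fun x => Gdd M x / x - 2 * Gd M x / x ^ 2 + 2 * Real.log (M x) / x ^ 3

section aux
variable {M J : ℝ → ℝ}

lemma lem_M_diff (hMsmooth : ContDiffOn ℝ 2 M (Set.Ioi 0)) {x : ℝ} (hx : 0 < x) :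
    DifferentiableAt ℝ M x := by
  have := (hMsmooth.differentiableOn (by norm_num)).differentiableAt
    (isOpen_Ioi.mem_nhds (show x ∈ Ioi 0 from hx))
  exact this

lemma lem_G_hasDeriv (hMpos : ∀ x > (0:ℝ), 0 < M x) (hMsmooth : ContDiffOn ℝ 2 M (Set.Ioi 0))
    {x : ℝ} (hx : 0 < x) : HasDerivAt (fun y => Real.log (M y)) (Gd M x) x := by
  have hd : DifferentiableAt ℝ (fun y => Real.log (M y)) x :=
    (lem_M_diff hMsmooth hx).log (hMpos x hx).ne'
  exact hd.hasDerivAt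

lemma lem_G1_hasDeriv (hlogconv : ∀ x > (0:ℝ), 0 < deriv (deriv (fun y => Real.log (M y))) x)
    {x : ℝ} (hx : 0 < x) : HasDerivAt (Gd M) (Gdd M x) x := by
  have hd : DifferentiableAt ℝ (Gd M) x := by
    by_contra hcon
    have : deriv (Gd M) x = 0 := deriv_zero_of_not_differentiableAt hcon
    have h2 := hlogconv x hx
    rw [show deriv (fun y => Real.log (M y)) = Gd M from rfl] at h2
    simp [this] at h2
  exact hd.hasDerivAt

lemma lem_q_hasDeriv (hMpos : ∀ x > (0:ℝ), 0 < M x) (hMsmooth : ContDiffOn ℝ 2 M (Set.Ioi 0))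
    {x : ℝ} (hx : 0 < x) : HasDerivAt (qq M) (q1 M x) x := by
  have h1 := (lem_G_hasDeriv hMpos hMsmooth hx).div (hasDerivAt_id x) hx.ne'
  have : (Gd M x * x - Real.log (M x) * 1) / x ^ 2 = q1 M x := by
    unfold q1; field_simp
  rw [← this]; exact h1

lemma lem_q1_hasDeriv (hMpos : ∀ x > (0:ℝ), 0 < M x) (hMsmooth : ContDiffOn ℝ 2 M (Set.Ioi 0))
    (hlogconv : ∀ x > (0:ℝ), 0 < deriv (deriv (fun y => Real.log (M y))) x)
    {x : ℝ} (hx : 0 < x) : HasDerivAt (q1 M) (q2 M x) x := by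
  have h1 := (lem_G1_hasDeriv hlogconv hx).div (hasDerivAt_id x) hx.ne'
  have h2 := (lem_G_hasDeriv hMpos hMsmooth hx).div (hasDerivAt_pow 2 x)
    (by positivity : (x:ℝ)^2 ≠ 0)
  have h3 := h1.sub h2
  have : (Gdd M x * x - Gd M x * 1) / x ^ 2 -
      (Gd M x * x ^ 2 - Real.log (M x) * (2 * x ^ (2-1))) / (x ^ 2) ^ 2 = q2 M x := by
    unfold q2; field_simp; ring
  rw [← this]; exact h3.congr_deriv rfl

lemma lem_J_eq (hMpos : ∀ x > (0:ℝ), 0 < M x) (hJ : ∀ x > (0:ℝ), J x = M x ^ (1 / x))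
    {x : ℝ} (hx : 0 < x) : J x = Real.exp (qq M x) := by
  rw [hJ x hx, Real.rpow_def_of_pos (hMpos x hx)]
  unfold qq
  ring_nf

lemma lem_J_hasDeriv (hMpos : ∀ x > (0:ℝ), 0 < M x) (hMsmooth : ContDiffOn ℝ 2 M (Set.Ioi 0))
    (hJ : ∀ x > (0:ℝ), J x = M x ^ (1 / x))
    {x : ℝ} (hx : 0 < x) : HasDerivAt J (q1 M x * Real.exp (qq M x)) x := by
  have hev : (fun y => Real.exp (qq M y)) =ᶠ[nhds x] J := by
    filter_upwards [isOpen_Ioi.mem_nhds (show x ∈ Ioi 0 from hx)] with y hy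
    exact (lem_J_eq hMpos hJ hy).symm
  have h1 : HasDerivAt (fun y => Real.exp (qq M y)) (q1 M x * Real.exp (qq M x)) x := by
    have := (lem_q_hasDeriv hMpos hMsmooth hx).exp
    rw [mul_comm] at this; exact this
  exact h1.congr_of_eventuallyEq hev.symm

lemma lem_dJ_eq (hMpos : ∀ x > (0:ℝ), 0 < M x) (hMsmooth : ContDiffOn ℝ 2 M (Set.Ioi 0))
    (hJ : ∀ x > (0:ℝ), J x = M x ^ (1 / x))
    {x : ℝ} (hx : 0 < x) : deriv J x = q1 M x * Real.exp (qq M x) :=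
  (lem_J_hasDeriv hMpos hMsmooth hJ hx).deriv

lemma lem_dJ_hasDeriv (hMpos : ∀ x > (0:ℝ), 0 < M x) (hMsmooth : ContDiffOn ℝ 2 M (Set.Ioi 0))
    (hlogconv : ∀ x > (0:ℝ), 0 < deriv (deriv (fun y => Real.log (M y))) x)
    (hJ : ∀ x > (0:ℝ), J x = M x ^ (1 / x))
    {x : ℝ} (hx : 0 < x) :
    HasDerivAt (deriv J) ((q2 M x + q1 M x ^ 2) * Real.exp (qq M x)) x := by
  have hev : (fun y => q1 M y * Real.exp (qq M y)) =ᶠ[nhds x] deriv J := by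
    filter_upwards [isOpen_Ioi.mem_nhds (show x ∈ Ioi 0 from hx)] with y hy
    exact (lem_dJ_eq hMpos hMsmooth hJ hy).symm
  have h1 : HasDerivAt (fun y => q1 M y * Real.exp (qq M y))
      ((q2 M x + q1 M x ^ 2) * Real.exp (qq M x)) x := by
    have hq1 := lem_q1_hasDeriv hMpos hMsmooth hlogconv hx
    have hq := (lem_q_hasDeriv hMpos hMsmooth hx).exp
    have := hq1.mul hq
    have heq : q2 M x * Real.exp (qq M x) + q1 M x * (Real.exp (qq M x) * q1 M x)
        = (q2 M x + q1 M x ^ 2) * Real.exp (qq M x) := by ring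
    rw [heq] at this; exact this
  exact h1.congr_of_eventuallyEq hev.symm

lemma lem_key (x : ℝ) (hx : 0 < x) : 2 * q1 M x + x * q2 M x = Gdd M x := by
  unfold q1 q2
  field_simp
  ring

lemma lem_J_pos (hMpos : ∀ x > (0:ℝ), 0 < M x) (hJ : ∀ x > (0:ℝ), J x = M x ^ (1 / x))
    {x : ℝ} (hx : 0 < x) : 0 < J x := by
  rw [lem_J_eq hMpos hJ hx]; exact Real.exp_pos _

lemma lem_g_eq {g : ℝ → ℝ} (hMpos : ∀ x > (0:ℝ), 0 < M x)
    (hJ : ∀ x > (0:ℝ), J x = M x ^ (1 / x)) (hg : ∀ x > (0:ℝ), g x = x * M x ^ (2 / x))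
    {x : ℝ} (hx : 0 < x) : g x = x * J x ^ 2 := by
  rw [hg x hx, hJ x hx, ← Real.rpow_natCast (M x ^ (1/x)) 2, ← Real.rpow_mul (hMpos x hx).le]
  norm_num
  left
  rw [div_eq_mul_inv, mul_comm]

lemma lem_g_hasDeriv {g : ℝ → ℝ} (hMpos : ∀ x > (0:ℝ), 0 < M x)
    (hMsmooth : ContDiffOn ℝ 2 M (Set.Ioi 0))
    (hJ : ∀ x > (0:ℝ), J x = M x ^ (1 / x)) (hg : ∀ x > (0:ℝ), g x = x * M x ^ (2 / x))
    {x : ℝ} (hx : 0 < x) :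
    HasDerivAt g (J x ^ 2 + x * (2 * J x * deriv J x)) x := by
  have hev : (fun y => y * J y ^ 2) =ᶠ[nhds x] g := by
    filter_upwards [isOpen_Ioi.mem_nhds (show x ∈ Ioi 0 from hx)] with y hy
    exact (lem_g_eq hMpos hJ hg hy).symm
  have hJd : HasDerivAt J (deriv J x) x := by
    have := lem_J_hasDeriv hMpos hMsmooth hJ hx
    rwa [← lem_dJ_eq hMpos hMsmooth hJ hx] at this
  have h1 : HasDerivAt (fun y => y * J y ^ 2) (J x ^ 2 + x * (2 * J x * deriv J x)) x := by
    have hp : HasDerivAt (fun y => J y ^ 2) (2 * J x ^ (2-1) * deriv J x) x := hJd.pow 2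
    have := (hasDerivAt_id x).mul hp
    have heq : 1 * J x ^ 2 + x * (2 * J x ^ (2-1) * deriv J x)
        = J x ^ 2 + x * (2 * J x * deriv J x) := by norm_num
    rw [← heq]; exact this
  exact h1.congr_of_eventuallyEq hev.symm

lemma lem_J_mono {x₀ : ℝ} (hx₀ : 0 < x₀) (hMpos : ∀ x > (0:ℝ), 0 < M x)
    (hMsmooth : ContDiffOn ℝ 2 M (Set.Ioi 0))
    (hJ : ∀ x > (0:ℝ), J x = M x ^ (1 / x)) (hJ' : ∀ x > x₀, 0 < deriv J x) :
    StrictMonoOn J (Set.Ici x₀) := by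
  apply strictMonoOn_of_deriv_pos (convex_Ici x₀)
  · intro y hy
    exact ((lem_J_hasDeriv hMpos hMsmooth hJ (lt_of_lt_of_le hx₀ hy)).continuousAt).continuousWithinAt
  · intro y hy
    rw [interior_Ici] at hy
    exact hJ' y hy

lemma lem_g_mono {g : ℝ → ℝ} {x₀ : ℝ} (hx₀ : 0 < x₀) (hMpos : ∀ x > (0:ℝ), 0 < M x)
    (hMsmooth : ContDiffOn ℝ 2 M (Set.Ioi 0))
    (hJ : ∀ x > (0:ℝ), J x = M x ^ (1 / x)) (hg : ∀ x > (0:ℝ), g x = x * M x ^ (2 / x))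
    (hJ' : ∀ x > x₀, 0 < deriv J x) :
    StrictMonoOn g (Set.Ici x₀) := by
  intro a ha b hb hab
  have ha0 : 0 < a := lt_of_lt_of_le hx₀ ha
  have hb0 : 0 < b := lt_of_lt_of_le hx₀ hb
  rw [lem_g_eq hMpos hJ hg ha0, lem_g_eq hMpos hJ hg hb0]
  have hJa : 0 < J a := lem_J_pos hMpos hJ ha0
  have hJab : J a < J b := lem_J_mono hx₀ hMpos hMsmooth hJ hJ' ha hb hab
  have : J a ^ 2 < J b ^ 2 := by nlinarith
  nlinarith

section ginv
variable {g ginv : ℝ → ℝ} {x₀ : ℝ}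

lemma lem_ginv_mono (hmono : StrictMonoOn g (Set.Ici x₀))
    (hginv_right : ∀ y ∈ Set.Ici (g x₀), ginv y ∈ Set.Ici x₀ ∧ g (ginv y) = y)
    {y₁ y₂ : ℝ} (h₁ : g x₀ ≤ y₁) (h₂ : g x₀ ≤ y₂) (h : y₁ ≤ y₂) : ginv y₁ ≤ ginv y₂ := by
  by_contra hcon
  push_neg at hcon
  have e₁ := hginv_right y₁ h₁
  have e₂ := hginv_right y₂ h₂
  have := hmono e₂.1 e₁.1 hcon
  rw [e₁.2, e₂.2] at this
  linarith

lemma lem_ginv_gt (hmono : StrictMonoOn g (Set.Ici x₀))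
    (hginv_right : ∀ y ∈ Set.Ici (g x₀), ginv y ∈ Set.Ici x₀ ∧ g (ginv y) = y)
    {y : ℝ} (h : g x₀ < y) : x₀ < ginv y := by
  have e := hginv_right y h.le
  rcases eq_or_lt_of_le (Set.mem_Ici.mp e.1) with he | he
  · rw [← he] at e; rw [e.2] at h; simp at h
  · exact he

lemma lem_ginv_cont (hmono : StrictMonoOn g (Set.Ici x₀))
    (hginv_right : ∀ y ∈ Set.Ici (g x₀), ginv y ∈ Set.Ici x₀ ∧ g (ginv y) = y)
    {y : ℝ} (hy : g x₀ < y) : ContinuousAt ginv y := by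
  have hx : x₀ < ginv y := lem_ginv_gt hmono hginv_right hy
  have hgy : g (ginv y) = y := (hginv_right y hy.le).2
  rw [ContinuousAt]
  rw [tendsto_order]
  constructor
  · intro b hb
    set x' := max x₀ ((b + ginv y) / 2) with hx'
    have hbx' : b < x' := lt_max_iff.2 (Or.inr (by linarith))
    have hx'0 : x₀ ≤ x' := le_max_left _ _
    have hx'lt : x' < ginv y := max_lt_iff.2 ⟨hx, by linarith⟩
    have hgx' : g x' < y := by
      have := hmono hx'0 (hginv_right y hy.le).1 hx'lt
      rwa [hgy] at this
    have hgx'0 : g x₀ ≤ g x' := by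
      rcases eq_or_lt_of_le hx'0 with he | he
      · rw [he]
      · exact (hmono (le_refl x₀ : x₀ ∈ Set.Ici x₀) hx'0 he).le
    filter_upwards [isOpen_Ioi.mem_nhds (show y ∈ Set.Ioi (g x') from hgx')] with z hz
    have hz' : g x₀ ≤ z := le_trans hgx'0 (le_of_lt hz)
    by_contra hcon
    push_neg at hcon
    have hle : ginv z ≤ x' := le_trans hcon hbx'.le
    have := hmono.monotoneOn (hginv_right z hz').1 hx'0 hle
    rw [(hginv_right z hz').2] at this
    exact absurd hz (not_lt.2 this)
  · intro b hb
    set x'' := (ginv y + b) / 2 with hx''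
    have h1 : ginv y < x'' := by linarith
    have h2 : x'' < b := by linarith
    have hgx'' : y < g x'' := by
      have := hmono (hginv_right y hy.le).1 (le_trans hx.le h1.le) h1
      rwa [hgy] at this
    filter_upwards [isOpen_Ioo.mem_nhds (show y ∈ Set.Ioo (g x₀) (g x'') from ⟨hy, hgx''⟩)]
      with z hz
    by_contra hcon
    push_neg at hcon
    have : g x'' ≤ g (ginv z) :=
      hmono.monotoneOn (le_trans hx.le h1.le) (hginv_right z hz.1.le).1 (le_trans h2.le hcon)
    rw [(hginv_right z hz.1.le).2] at this
    exact absurd hz.2 (not_lt.2 this)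
end ginv

lemma lem_Dd_val (w Lw Nw Jw dJw A G2 k : ℝ) (hw : 0 < w) (hLw : 0 < Lw)
    (hNw : 0 < Nw) (hJw : 0 < Jw)
    (hkk : k = Nw * Jw ^ 2 * Lw / w ^ 2)
    (hA : A = (Jw ^ 2 * G2 + Nw * dJw ^ 2 - 2 * Jw * dJw) / (Nw * Jw))
    (hdJ : dJw = Lw * Jw / Nw) :
    -w⁻¹ * Jw + Lw * (dJw * ((Jw ^ 2 + Nw * (2 * Jw * dJw))⁻¹
        * ((k * (2 * w) * Lw - k * w ^ 2 * -w⁻¹) / Lw ^ 2)))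
      - (((Jw ^ 2 + Nw * (2 * Jw * dJw))⁻¹
            * ((k * (2 * w) * Lw - k * w ^ 2 * -w⁻¹) / Lw ^ 2)) * dJw
          + Nw * (A * ((Jw ^ 2 + Nw * (2 * Jw * dJw))⁻¹
            * ((k * (2 * w) * Lw - k * w ^ 2 * -w⁻¹) / Lw ^ 2))))
      = -(Nw * Jw * G2) / (w * Lw) := by
  subst hdJ hA hkk
  have hd : (0:ℝ) < Jw ^ 2 + Nw * (2 * Jw * (Lw * Jw / Nw)) := by positivity
  field_simp
  ring

set_option maxHeartbeats 1600000 in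
/-- Let `ε₁ ∈ (0,1)`.  There exists a constant `C(ε₁) > 0` depending only on `ε₁` such
that for every `k > x₀²·J(x₀)·J'(x₀)·e^{2·x₀·J'(x₀)/J(x₀)}` with
`k ≥ 2·g(x₀)·log(1/ε₁)/ε₁²`: if the critical point `ε(k)` of `h` satisfies `ε(k) > ε₁`,
then `h(ε₁) ≤ h(ε(k)) ≤ C(ε₁)·h(ε₁)`. -/
theorem h_at_critical_point_comparable (M J g : ℝ → ℝ)
    (hMpos : ∀ x > (0 : ℝ), 0 < M x)
    (hMsmooth : ContDiffOn ℝ 2 M (Set.Ioi 0))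
    (hlogconv : ∀ x > (0 : ℝ), 0 < deriv (deriv (fun y => Real.log (M y))) x)
    (hJ : ∀ x > (0 : ℝ), J x = M x ^ (1 / x))
    (hJunb : ∀ B : ℝ, ∃ x > (0 : ℝ), B < J x)
    (hg : ∀ x > (0 : ℝ), g x = x * M x ^ (2 / x))
    (x₀ : ℝ) (hx₀ : 0 < x₀) (hJ' : ∀ x > x₀, 0 < deriv J x)
    (ginv : ℝ → ℝ)
    (hginv_left : ∀ x ∈ Set.Ici x₀, ginv (g x) = x)
    (hginv_right : ∀ y ∈ Set.Ici (g x₀), ginv y ∈ Set.Ici x₀ ∧ g (ginv y) = y)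
    (ε₁ : ℝ) (hε₁ : ε₁ ∈ Set.Ioo (0 : ℝ) 1) :
    ∃ C > (0 : ℝ), ∀ (k ε₀ εc : ℝ) (h : ℝ → ℝ),
      x₀ ^ 2 * J x₀ * deriv J x₀ * Real.exp (2 * x₀ * deriv J x₀ / J x₀) < k →
      2 * g x₀ * Real.log (1 / ε₁) / ε₁ ^ 2 ≤ k →
      ε₀ ∈ Set.Ioo (0 : ℝ) 1 →
      k * ε₀ ^ 2 / Real.log (1 / ε₀) = g x₀ →
      (∀ ε, h ε = ginv (k * ε ^ 2 / Real.log (1 / ε)) * Real.log (1 / ε)) →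
      εc ∈ Set.Ioo ε₀ 1 →
      deriv h εc = 0 →
      ε₁ < εc →
      h ε₁ ≤ h εc ∧ h εc ≤ C * h ε₁ := by
  obtain ⟨hε₁0, hε₁1⟩ := hε₁
  refine ⟨ε₁⁻¹ ^ 2, by positivity, ?_⟩
  intro k ε₀ εc h hk1 hk2 hε₀ hε₀eq hh hεc hcrit hlt
  clear hk1 hε₀eq hε₀ hJunb hginv_left
  have hεc1 : εc < 1 := hεc.2
  have hεc0 : 0 < εc := lt_trans hε₁0 hlt
  have hgmono : StrictMonoOn g (Set.Ici x₀) := lem_g_mono hx₀ hMpos hMsmooth hJ hg hJ'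
  have hQpos : 0 < g x₀ := by
    rw [lem_g_eq hMpos hJ hg hx₀]
    have := lem_J_pos hMpos hJ hx₀
    positivity
  set L : ℝ → ℝ := fun ε => -Real.log ε with hLdef
  have hlog1 : ∀ ε : ℝ, Real.log (1 / ε) = L ε := by
    intro ε; rw [one_div, Real.log_inv]
  have hLpos : ∀ ε : ℝ, ε ∈ Set.Ioo (0:ℝ) 1 → 0 < L ε := by
    intro ε hε
    simp only [hLdef, neg_pos]
    exact Real.log_neg hε.1 hε.2
  have hLε₁ : 0 < L ε₁ := hLpos ε₁ ⟨hε₁0, hε₁1⟩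
  have hk0 : 0 < k := by
    have h2 : 0 < 2 * g x₀ * Real.log (1 / ε₁) / ε₁ ^ 2 := by
      rw [hlog1]; positivity
    linarith
  set u : ℝ → ℝ := fun ε => k * ε ^ 2 / L ε with hudef
  set N : ℝ → ℝ := fun ε => ginv (u ε) with hNdef
  have hfun : h = fun ε => N ε * L ε := by
    funext ε
    rw [hh ε, hlog1]
  -- u is strictly monotone on (0,1)
  have hu_mono : ∀ a ∈ Set.Ioo (0:ℝ) 1, ∀ b ∈ Set.Ioo (0:ℝ) 1, a < b → u a < u b := by
    intro a ha b hb hab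
    have hLa := hLpos a ha
    have hLb := hLpos b hb
    have hLba : L b < L a := by
      simp only [hLdef, neg_lt_neg_iff]
      exact Real.log_lt_log ha.1 hab
    have h1 : k * a ^ 2 < k * b ^ 2 := by
      have h2 : a ^ 2 < b ^ 2 := by nlinarith [ha.1, hab]
      exact mul_lt_mul_of_pos_left h2 hk0
    exact div_lt_div₀ h1 hLba.le (by positivity) hLb
  -- u ε₁ is at least 2 g x₀
  have hu1 : 2 * g x₀ ≤ u ε₁ := by
    rw [hlog1] at hk2
    have h1 : 2 * g x₀ * L ε₁ ≤ k * ε₁ ^ 2 := by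
      rw [div_le_iff₀ (by positivity : (0:ℝ) < ε₁ ^ 2)] at hk2
      nlinarith [hLε₁]
    rw [hudef]
    rw [le_div_iff₀ hLε₁]
    exact h1
  -- facts on the interval [ε₁, εc]
  have hIoo : ∀ ε ∈ Set.Icc ε₁ εc, ε ∈ Set.Ioo (0:ℝ) 1 := by
    intro ε hε
    exact ⟨lt_of_lt_of_le hε₁0 hε.1, lt_of_le_of_lt hε.2 hεc1⟩
  have huge : ∀ ε ∈ Set.Icc ε₁ εc, 2 * g x₀ ≤ u ε := by
    intro ε hε
    rcases eq_or_lt_of_le hε.1 with he | he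
    · rw [← he]; exact hu1
    · exact le_trans hu1 (hu_mono ε₁ ⟨hε₁0, hε₁1⟩ ε (hIoo ε hε) he).le
  have hugt : ∀ ε ∈ Set.Icc ε₁ εc, g x₀ < u ε := by
    intro ε hε
    have := huge ε hε
    linarith
  have hNgt : ∀ ε ∈ Set.Icc ε₁ εc, x₀ < N ε := by
    intro ε hε
    exact lem_ginv_gt hgmono hginv_right (hugt ε hε)
  have hNpos : ∀ ε ∈ Set.Icc ε₁ εc, 0 < N ε := fun ε hε => lt_trans hx₀ (hNgt ε hε)
  have hgN : ∀ ε ∈ Set.Icc ε₁ εc, g (N ε) = u ε := by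
    intro ε hε
    exact (hginv_right (u ε) (hugt ε hε).le).2
  have hJNpos : ∀ ε ∈ Set.Icc ε₁ εc, 0 < J (N ε) := by
    intro ε hε
    exact lem_J_pos hMpos hJ (hNpos ε hε)
  have hkI : ∀ ε ∈ Set.Icc ε₁ εc, k * ε ^ 2 = N ε * J (N ε) ^ 2 * L ε := by
    intro ε hε
    have h1 : g (N ε) = N ε * J (N ε) ^ 2 := lem_g_eq hMpos hJ hg (hNpos ε hε)
    have h2 := hgN ε hε
    rw [h1, hudef] at h2
    have hLe : 0 < L ε := hLpos ε (hIoo ε hε)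
    field_simp at h2
    linarith [h2]
  have hNmono : ∀ ε ∈ Set.Icc ε₁ εc, ∀ ε' ∈ Set.Icc ε₁ εc, ε ≤ ε' → N ε ≤ N ε' := by
    intro ε hε ε' hε' hee
    apply lem_ginv_mono hgmono hginv_right (le_trans (by linarith) (huge ε hε))
      (le_trans (by linarith) (huge ε' hε'))
    rcases eq_or_lt_of_le hee with he | he
    · rw [he]
    · exact (hu_mono ε (hIoo ε hε) ε' (hIoo ε' hε') he).le
  have hmem1 : ε₁ ∈ Set.Icc ε₁ εc := ⟨le_refl _, hlt.le⟩
  have hmemc : εc ∈ Set.Icc ε₁ εc := ⟨hlt.le, le_refl _⟩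
  -- Upper bound
  have hupper : h εc ≤ ε₁⁻¹ ^ 2 * h ε₁ := by
    have e1 : h εc * J (N εc) ^ 2 = k * εc ^ 2 := by
      rw [hfun]; simp only []
      rw [hkI εc hmemc]; ring
    have e2 : h ε₁ * J (N ε₁) ^ 2 = k * ε₁ ^ 2 := by
      rw [hfun]; simp only []
      rw [hkI ε₁ hmem1]; ring
    have hJle : J (N ε₁) ≤ J (N εc) :=
      (lem_J_mono hx₀ hMpos hMsmooth hJ hJ').monotoneOn (hNgt ε₁ hmem1).le (hNgt εc hmemc).le
        (hNmono ε₁ hmem1 εc hmemc hlt.le)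
    have hJ1 := hJNpos ε₁ hmem1
    have hJc := hJNpos εc hmemc
    have hc : h εc = k * εc ^ 2 / J (N εc) ^ 2 := by
      rw [eq_div_iff (by positivity)]; exact e1
    have h1 : h ε₁ = k * ε₁ ^ 2 / J (N ε₁) ^ 2 := by
      rw [eq_div_iff (by positivity)]; exact e2
    rw [hc, h1]
    have hrhs : ε₁⁻¹ ^ 2 * (k * ε₁ ^ 2 / J (N ε₁) ^ 2) = k / J (N ε₁) ^ 2 := by
      field_simp
    rw [hrhs]
    have hkεc : k * εc ^ 2 ≤ k := by
      nlinarith [mul_pos hk0 (mul_pos (sub_pos.2 hεc1) (by linarith : (0:ℝ) < 1 + εc))]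
    calc k * εc ^ 2 / J (N εc) ^ 2 ≤ k * εc ^ 2 / J (N ε₁) ^ 2 := by
          gcongr
      _ ≤ k / J (N ε₁) ^ 2 := by gcongr
  -- Derivative machinery
  set dJ : ℝ → ℝ := deriv J with hdJdef
  set gd : ℝ → ℝ := fun x => J x ^ 2 + x * (2 * J x * dJ x) with hgddef
  set ud : ℝ → ℝ := fun ε => (k * (2 * ε) * L ε - k * ε ^ 2 * (-ε⁻¹)) / L ε ^ 2 with huddef
  set nd : ℝ → ℝ := fun ε => (gd (N ε))⁻¹ * ud ε with hnddef
  set D : ℝ → ℝ := fun ε => L ε * J (N ε) - N ε * dJ (N ε) with hDdef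
  have hgdpos : ∀ ε ∈ Set.Icc ε₁ εc, 0 < gd (N ε) := by
    intro ε hε
    have h1 := hJNpos ε hε
    have h2 := hJ' (N ε) (hNgt ε hε)
    have h3 := hNpos ε hε
    simp only [hgddef]
    positivity
  have hL' : ∀ ε ∈ Set.Icc ε₁ εc, HasDerivAt L (-ε⁻¹) ε := by
    intro ε hε
    exact (Real.hasDerivAt_log (hIoo ε hε).1.ne').neg
  have hu' : ∀ ε ∈ Set.Icc ε₁ εc, HasDerivAt u (ud ε) ε := by
    intro ε hε
    have hLe : 0 < L ε := hLpos ε (hIoo ε hε)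
    have h1 : HasDerivAt (fun ε : ℝ => k * ε ^ 2) (k * (2 * ε)) ε := by
      have := (hasDerivAt_pow 2 ε).const_mul k
      simpa using this
    exact h1.div (hL' ε hε) hLe.ne'
  have hN' : ∀ ε ∈ Set.Icc ε₁ εc, HasDerivAt N (nd ε) ε := by
    intro ε hε
    have hginvd : HasDerivAt ginv (gd (N ε))⁻¹ (u ε) := by
      apply HasDerivAt.of_local_left_inverse
        (lem_ginv_cont hgmono hginv_right (hugt ε hε))
        (lem_g_hasDeriv hMpos hMsmooth hJ hg (hNpos ε hε))
        (hgdpos ε hε).ne'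
      filter_upwards [isOpen_Ioi.mem_nhds (show u ε ∈ Set.Ioi (g x₀) from hugt ε hε)] with y hy
      exact (hginv_right y (Set.mem_Ici.mpr (le_of_lt (Set.mem_Ioi.mp hy)))).2
    have := hginvd.comp ε (hu' ε hε)
    exact this
  have hh' : ∀ ε ∈ Set.Icc ε₁ εc, HasDerivAt h (nd ε * L ε + N ε * -ε⁻¹) ε := by
    intro ε hε
    rw [hfun]
    exact (hN' ε hε).mul (hL' ε hε)
  -- sign identity
  have hsign : ∀ ε ∈ Set.Icc ε₁ εc,
      ε * gd (N ε) * (nd ε * L ε + N ε * -ε⁻¹) = 2 * N ε * J (N ε) * D ε := by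
    intro ε hε
    have hLe : 0 < L ε := hLpos ε (hIoo ε hε)
    have hεp : 0 < ε := (hIoo ε hε).1
    have hgdp := hgdpos ε hε
    have hk := hkI ε hε
    have hkk : k = N ε * J (N ε) ^ 2 * L ε / ε ^ 2 := by
      rw [eq_div_iff (by positivity : (ε:ℝ) ^ 2 ≠ 0)]
      linarith [hk]
    simp only [hnddef, huddef, hgddef, hDdef]
    rw [hkk]
    have hne : J (N ε) + N ε * dJ (N ε) * 2 ≠ 0 := by
      have := hJNpos ε hε; have := hJ' (N ε) (hNgt ε hε); have := hNpos ε hε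
      positivity
    field_simp
    have hX : (J (N ε) + N ε * dJ (N ε) * 2)⁻¹ * (J (N ε) + N ε * dJ (N ε) * 2) = 1 :=
      inv_mul_cancel₀ hne
    linear_combination (J (N ε) ^ 2 * N ε * (2 * L ε + 1)) * hX
  -- D vanishes at the critical point
  have hDc : D εc = 0 := by
    have hval := (hh' εc hmemc).deriv
    rw [hcrit] at hval
    have hs := hsign εc hmemc
    rw [← hval] at hs
    simp only [mul_zero] at hs
    have h2 : 0 < 2 * N εc * J (N εc) := by
      have := hNpos εc hmemc; have := hJNpos εc hmemc; positivity
    rcases mul_eq_zero.mp hs.symm with h' | h'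
    · exact absurd h' h2.ne'
    · exact h'
  -- at any zero of D in the interval, D has negative derivative
  have hDzero_neg : ∀ w ∈ Set.Icc ε₁ εc, D w = 0 → ∃ d, HasDerivAt D d w ∧ d < 0 := by
    intro w hw hDw
    have hNw : 0 < N w := hNpos w hw
    have hwp : 0 < w := (hIoo w hw).1
    have hLw : 0 < L w := hLpos w (hIoo w hw)
    have hJw : 0 < J (N w) := hJNpos w hw
    have hdJw : 0 < dJ (N w) := hJ' (N w) (hNgt w hw)
    have hgdw : 0 < gd (N w) := hgdpos w hw
    set A : ℝ := (q2 M (N w) + q1 M (N w) ^ 2) * Real.exp (qq M (N w)) with hAdef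
    have hJd : HasDerivAt J (dJ (N w)) (N w) := by
      have := lem_J_hasDeriv hMpos hMsmooth hJ hNw
      rw [hdJdef, lem_dJ_eq hMpos hMsmooth hJ hNw]
      exact this
    have hdJd : HasDerivAt dJ A (N w) := by
      rw [hdJdef, hAdef]
      exact lem_dJ_hasDeriv hMpos hMsmooth hlogconv hJ hNw
    have hJN' : HasDerivAt (fun ε => J (N ε)) (dJ (N w) * nd w) w := hJd.comp w (hN' w hw)
    have hdJN' : HasDerivAt (fun ε => dJ (N ε)) (A * nd w) w := hdJd.comp w (hN' w hw)
    have hDder : HasDerivAt D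
        (-w⁻¹ * J (N w) + L w * (dJ (N w) * nd w) - (nd w * dJ (N w) + N w * (A * nd w))) w := by
      rw [hDdef]
      exact ((hL' w hw).mul hJN').sub ((hN' w hw).mul hdJN')
    refine ⟨_, hDder, ?_⟩
    have hG2 : 0 < Gdd M (N w) := hlogconv (N w) hNw
    have hkey : N w * J (N w) * A + 2 * J (N w) * dJ (N w) - N w * dJ (N w) ^ 2
        = J (N w) ^ 2 * Gdd M (N w) := by
      rw [hAdef, hdJdef, lem_dJ_eq hMpos hMsmooth hJ hNw, lem_J_eq hMpos hJ hNw]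
      have hkl := lem_key (M := M) (N w) hNw
      linear_combination (Real.exp (qq M (N w))) ^ 2 * hkl
    have hDw0 : L w * J (N w) = N w * dJ (N w) := by
      have hDw' : L w * J (N w) - N w * dJ (N w) = 0 := hDw
      linarith
    have hkk : k = N w * J (N w) ^ 2 * L w / w ^ 2 := by
      rw [eq_div_iff (by positivity : (w:ℝ) ^ 2 ≠ 0)]
      linarith [hkI w hw]
    have hA : A = (J (N w) ^ 2 * Gdd M (N w) + N w * dJ (N w) ^ 2 - 2 * J (N w) * dJ (N w))
        / (N w * J (N w)) := by
      rw [eq_div_iff (by positivity : N w * J (N w) ≠ 0)]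
      linarith [hkey]
    have hdJval : dJ (N w) = L w * J (N w) / N w := by
      rw [eq_div_iff hNw.ne']
      linarith [hDw0]
    have hndw : nd w = (J (N w) ^ 2 + N w * (2 * J (N w) * dJ (N w)))⁻¹
        * ((k * (2 * w) * L w - k * w ^ 2 * -w⁻¹) / L w ^ 2) := rfl
    have hval : -w⁻¹ * J (N w) + L w * (dJ (N w) * nd w) - (nd w * dJ (N w) + N w * (A * nd w))
        = -(N w * J (N w) * Gdd M (N w)) / (w * L w) := by
      rw [hndw]
      exact lem_Dd_val w (L w) (N w) (J (N w)) (dJ (N w)) A (Gdd M (N w)) k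
        hwp hLw hNw hJw hkk hA hdJval
    rw [hval]
    apply div_neg_of_neg_of_pos
    · have : 0 < N w * J (N w) * Gdd M (N w) := by positivity
      linarith
    · positivity
  -- continuity of D on the interval
  have hDcont : ContinuousOn D (Set.Icc ε₁ εc) := by
    intro ε hε
    apply ContinuousAt.continuousWithinAt
    have hNw : 0 < N ε := hNpos ε hε
    have hLc : ContinuousAt L ε := ((Real.continuousAt_log (hIoo ε hε).1.ne')).neg
    have hNc : ContinuousAt N ε := (hN' ε hε).continuousAt
    have hJc : ContinuousAt J (N ε) := by
      have := lem_J_hasDeriv hMpos hMsmooth hJ hNw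
      exact this.continuousAt
    have hdJc : ContinuousAt dJ (N ε) := by
      rw [hdJdef]
      exact (lem_dJ_hasDeriv hMpos hMsmooth hlogconv hJ hNw).continuousAt
    have : ContinuousAt (fun ε => L ε * J (N ε) - N ε * dJ (N ε)) ε :=
      (hLc.mul (hJc.comp hNc)).sub (hNc.mul (hdJc.comp hNc))
    exact this
  -- D is nonnegative on the interval
  have hD0 : ∀ ε ∈ Set.Icc ε₁ εc, 0 ≤ D ε := by
    by_contra hcon
    push_neg at hcon
    obtain ⟨a, ha, hDa⟩ := hcon
    have hac : a < εc := by
      rcases eq_or_lt_of_le ha.2 with he | he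
      · rw [he] at hDa; rw [hDc] at hDa; exact absurd hDa (lt_irrefl 0).elim
      · exact he
    set S : Set ℝ := Set.Icc a εc ∩ D ⁻¹' {0} with hSdef
    have hsub : Set.Icc a εc ⊆ Set.Icc ε₁ εc := Set.Icc_subset_Icc ha.1 (le_refl _)
    have hScl : IsClosed S :=
      (hDcont.mono hsub).preimage_isClosed_of_isClosed isClosed_Icc isClosed_singleton
    have hSne : S.Nonempty := ⟨εc, ⟨hac.le, le_refl _⟩, hDc⟩
    have hSbdd : BddBelow S := ⟨a, fun x hx => hx.1.1⟩
    set w := sInf S with hwdef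
    have hwS : w ∈ S := hScl.csInf_mem hSne hSbdd
    have hwIcc : w ∈ Set.Icc a εc := hwS.1
    have hDw : D w = 0 := hwS.2
    have haw : a < w := by
      rcases eq_or_lt_of_le hwIcc.1 with he | he
      · rw [he] at hDa; rw [hDw] at hDa; exact absurd hDa (lt_irrefl 0).elim
      · exact he
    have hwI : w ∈ Set.Icc ε₁ εc := ⟨le_trans ha.1 hwIcc.1, hwIcc.2⟩
    -- D is negative on [a, w)
    have hneg : ∀ x ∈ Set.Ico a w, D x < 0 := by
      intro x hx
      rcases lt_trichotomy (D x) 0 with hlt' | heq' | hgt'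
      · exact hlt'
      · exfalso
        have hxS : x ∈ S := ⟨⟨hx.1, le_trans hx.2.le hwIcc.2⟩, heq'⟩
        exact absurd (csInf_le hSbdd hxS) (not_le.2 hx.2)
      · exfalso
        have hax : a ≤ x := hx.1
        have hcont' : ContinuousOn D (Set.Icc a x) :=
          (hDcont.mono hsub).mono (Set.Icc_subset_Icc (le_refl _) (le_trans hx.2.le hwIcc.2))
        have h0m : (0:ℝ) ∈ Set.Icc (D a) (D x) := ⟨hDa.le, hgt'.le⟩
        obtain ⟨c, hc, hDcz⟩ := intermediate_value_Icc hax hcont' h0m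
        have hcS : c ∈ S := ⟨⟨hc.1, le_trans hc.2 (le_trans hx.2.le hwIcc.2)⟩, hDcz⟩
        have := csInf_le hSbdd hcS
        have : c < w := lt_of_le_of_lt hc.2 hx.2
        exact absurd (csInf_le hSbdd hcS) (not_le.2 this)
    obtain ⟨d, hd, hdneg⟩ := hDzero_neg w hwI hDw
    -- the left derivative at w must be nonnegative: contradiction
    have hwmem : w ∉ Set.Ioo a w := fun hc => lt_irrefl w hc.2
    have hsl : Filter.Tendsto (slope D w) (nhdsWithin w (Set.Ioo a w)) (nhds d) :=
      (hasDerivWithinAt_iff_tendsto_slope' hwmem).1 (hd.hasDerivWithinAt)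
    have hnb : (nhdsWithin w (Set.Ioo a w)).NeBot := right_nhdsWithin_Ioo_neBot haw
    have hge : 0 ≤ d := by
      apply ge_of_tendsto hsl
      filter_upwards [self_mem_nhdsWithin] with x hx
      have hDx : D x < 0 := hneg x ⟨hx.1.le, hx.2⟩
      have hxw : x - w < 0 := sub_neg.2 hx.2
      rw [slope_def_field]
      rw [hDw]
      have : 0 < (0 - D x) / (w - x) := div_pos (by linarith) (by linarith)
      calc (0:ℝ) ≤ (0 - D x) / (w - x) := this.le
        _ = (D x - 0) / (x - w) := by rw [div_eq_div_iff (by linarith) (by linarith)]; ring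
    linarith
  -- h is monotone on [ε₁, εc]
  have hmono_h : MonotoneOn h (Set.Icc ε₁ εc) := by
    apply monotoneOn_of_deriv_nonneg (convex_Icc ε₁ εc)
    · intro x hx
      exact ((hh' x hx).continuousAt).continuousWithinAt
    · intro x hx
      rw [interior_Icc] at hx
      exact ((hh' x (Set.Ioo_subset_Icc_self hx)).differentiableAt).differentiableWithinAt
    · intro x hx
      rw [interior_Icc] at hx
      have hx' := Set.Ioo_subset_Icc_self hx
      rw [(hh' x hx').deriv]
      have hs := hsign x hx'
      have hDx := hD0 x hx'
      have hpos : 0 < x * gd (N x) := mul_pos (hIoo x hx').1 (hgdpos x hx')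
      have hR : 0 ≤ 2 * N x * J (N x) * D x := by
        have := hNpos x hx'; have := hJNpos x hx'
        positivity
      have heq : nd x * L x + N x * -x⁻¹ = 2 * N x * J (N x) * D x / (x * gd (N x)) := by
        rw [eq_div_iff hpos.ne']
        linarith [hs]
      rw [heq]
      exact div_nonneg hR hpos.le
  exact ⟨hmono_h hmem1 hmemc hlt.le, hupper⟩
end aux
end

section
/- The function f tends to +∞ as k → ∞, and there exists k₁ > k₀ such that f is strictly increasing on (k₁, ∞). -/
open Real Filter Set

/-- helper: sqrt tends to atTop -/
lemma my_sqrt_tendsto : Tendsto Real.sqrt atTop atTop := by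
  apply tendsto_atTop.2
  intro b
  filter_upwards [eventually_ge_atTop ((max b 0)^2)] with x hx
  calc b ≤ max b 0 := le_max_left _ _
    _ = Real.sqrt ((max b 0)^2) := (Real.sqrt_sq (le_max_right _ _)).symm
    _ ≤ Real.sqrt x := Real.sqrt_le_sqrt hx

/-- helper: log x ≤ 2 * sqrt x for x > 0 -/
lemma my_log_le_two_sqrt {x : ℝ} (hx : 0 < x) : Real.log x ≤ 2 * Real.sqrt x := by
  have h1 : Real.log x = 2 * Real.log (Real.sqrt x) := by
    rw [Real.log_sqrt hx.le]; ring
  rw [h1]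
  have := Real.log_le_sub_one_of_pos (Real.sqrt_pos.2 hx)
  nlinarith [Real.sqrt_pos.2 hx]

/-- helper: bound from derivative bound -/
lemma my_bdd_of_deriv_le (u u' : ℝ → ℝ) (a c : ℝ) (ha : 0 < a) (hc : 0 ≤ c)
    (hu : ∀ x ∈ Ici a, HasDerivAt u (u' x) x)
    (hle : ∀ x ∈ Ici a, u' x ≤ c / x ^ 2) :
    ∀ x ∈ Ici a, u x ≤ u a + c / a := by
  have hderiv : ∀ x ∈ Ici a, HasDerivAt (fun y => u y + c / y) (u' x - c / x ^ 2) x := by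
    intro x hx
    have hx0 : x ≠ 0 := (lt_of_lt_of_le ha hx).ne'
    have h2 : HasDerivAt (fun y : ℝ => c / y) (-(c / x ^ 2)) x := by
      have := (hasDerivAt_inv hx0).const_mul c
      have heq : (fun y : ℝ => c / y) = fun y : ℝ => c * y⁻¹ := by
        funext y; rw [div_eq_mul_inv]
      rw [heq]
      convert this using 1
      · rfl
      · rfl
      rw [pow_two, mul_inv]
      ring
    have := (hu x hx).add h2
    convert this using 1
    all_goals rfl
  have anti : AntitoneOn (fun y => u y + c / y) (Ici a) := by
    apply antitoneOn_of_deriv_nonpos (convex_Ici a)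
    · intro x hx; exact (hderiv x hx).continuousAt.continuousWithinAt
    · intro x hx
      rw [interior_Ici] at hx
      exact (hderiv x (mem_Ici.2 (le_of_lt hx))).differentiableAt.differentiableWithinAt
    · intro x hx
      rw [interior_Ici] at hx
      rw [(hderiv x (mem_Ici.2 hx.le)).deriv]
      have := hle x (mem_Ici.2 hx.le)
      linarith
  intro x hx
  have h1 := anti (self_mem_Ici) hx hx
  have hx0 : 0 < x := lt_of_lt_of_le ha hx
  have : 0 ≤ c / x := div_nonneg hc hx0.le
  simp only at h1
  linarith

set_option maxHeartbeats 4000000 in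
set_option maxHeartbeats 4000000 in
/-- The function `f` tends to `+∞` as `k → ∞`, and there exists `k₁ > k₀` such that `f`
is strictly increasing on `(k₁,∞)`.  Here, for
`k > k₀ := x₀²·J(x₀)·J'(x₀)·e^{2·x₀·J'(x₀)/J(x₀)}`, `N(k)` is the unique `N ∈ (x₀,∞)`
with `N²·J(N)·J'(N)·e^{2·N·J'(N)/J(N)} = k`, and
`f(k) = N(k)·√(J'(N(k))/J(N(k)))/√(log k)`. -/
theorem f_tendsto_atTop_and_eventually_strictMono (M J : ℝ → ℝ)
    (hMpos : ∀ x > (0 : ℝ), 0 < M x)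
    (hMsmooth : ContDiffOn ℝ 2 M (Set.Ioi 0))
    (hlogconv : ∀ x > (0 : ℝ), 0 < deriv (deriv (fun y => Real.log (M y))) x)
    (hJ : ∀ x > (0 : ℝ), J x = M x ^ (1 / x))
    (hJunb : ∀ B : ℝ, ∃ x > (0 : ℝ), B < J x)
    (x₀ : ℝ) (hx₀ : 0 < x₀) (hJ' : ∀ x > x₀, 0 < deriv J x)
    (Nfun f : ℝ → ℝ)
    (hNfun : ∀ k : ℝ,
      x₀ ^ 2 * J x₀ * deriv J x₀ * Real.exp (2 * x₀ * deriv J x₀ / J x₀) < k →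
      x₀ < Nfun k ∧
        (Nfun k) ^ 2 * J (Nfun k) * deriv J (Nfun k) *
          Real.exp (2 * Nfun k * deriv J (Nfun k) / J (Nfun k)) = k)
    (hf : ∀ k, f k = Nfun k * Real.sqrt (deriv J (Nfun k) / J (Nfun k)) /
      Real.sqrt (Real.log k)) :
    Filter.Tendsto f Filter.atTop Filter.atTop ∧
    ∃ k₁ : ℝ,
      x₀ ^ 2 * J x₀ * deriv J x₀ * Real.exp (2 * x₀ * deriv J x₀ / J x₀) < k₁ ∧
      StrictMonoOn f (Set.Ioi k₁) := by
  set k₀ : ℝ := x₀ ^ 2 * J x₀ * deriv J x₀ * Real.exp (2 * x₀ * deriv J x₀ / J x₀) with hk₀def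
  set L : ℝ → ℝ := fun x => Real.log (M x) with hLdef
  set φ : ℝ → ℝ := fun x => x * deriv L x - L x with hφdef
  -- smoothness
  have hLsm : ContDiffOn ℝ 2 L (Set.Ioi 0) := hMsmooth.log (fun x hx => (hMpos x hx).ne')
  have hL1 : ∀ x > (0:ℝ), HasDerivAt L (deriv L x) x := by
    intro x hx
    exact ((hLsm.differentiableOn (by norm_num)).differentiableAt
      (isOpen_Ioi.mem_nhds hx)).hasDerivAt
  have hL2 : ∀ x > (0:ℝ), HasDerivAt (deriv L) (deriv (deriv L) x) x := by
    intro x hx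
    have h1 : ContDiffOn ℝ 1 (deriv L) (Set.Ioi 0) :=
      hLsm.deriv_of_isOpen isOpen_Ioi (by norm_num)
    exact ((h1.differentiableOn (by norm_num)).differentiableAt
      (isOpen_Ioi.mem_nhds hx)).hasDerivAt
  have hcc : ∀ x > (0:ℝ), 0 < deriv (deriv L) x := hlogconv
  have hphid : ∀ x > (0:ℝ), HasDerivAt φ (x * deriv (deriv L) x) x := by
    intro x hx
    rw [hφdef]
    have := ((hasDerivAt_id x).mul (hL2 x hx)).sub (hL1 x hx)
    convert this using 1
    · rfl
    · rfl
    · rfl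
    simp only [id_eq]
    ring
  have hphimono : StrictMonoOn φ (Set.Ioi 0) := by
    apply strictMonoOn_of_deriv_pos (convex_Ioi 0)
    · intro x hx; exact (hphid x hx).continuousAt.continuousWithinAt
    · intro x hx
      rw [interior_Ioi] at hx
      rw [(hphid x hx).deriv]
      exact mul_pos hx (hcc x hx)
  -- J facts
  have hJexp : ∀ x > (0:ℝ), J x = Real.exp (L x / x) := by
    intro x hx
    rw [hJ x hx, Real.rpow_def_of_pos (hMpos x hx), mul_one_div]
  clear_value k₀ L φ
  have hJpos : ∀ x > (0:ℝ), 0 < J x := by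
    intro x hx; rw [hJexp x hx]; exact Real.exp_pos _
  have hJd : ∀ x > (0:ℝ), HasDerivAt J (J x * (φ x / x ^ 2)) x := by
    intro x hx
    have h1 : HasDerivAt (fun y => L y / y) ((deriv L x * x - L x * 1) / x ^ 2) x :=
      (hL1 x hx).div (hasDerivAt_id x) hx.ne'
    have h2 := h1.exp
    have hev : J =ᶠ[nhds x] (fun y => Real.exp (L y / y)) :=
      Filter.eventuallyEq_of_mem (isOpen_Ioi.mem_nhds hx) (fun y hy => hJexp y hy)
    have h3 := h2.congr_of_eventuallyEq hev
    convert h3 using 1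
    · rfl
    · rfl
    rw [hJexp x hx, hφdef]
    ring
  have hJdval : ∀ x > (0:ℝ), deriv J x = J x * (φ x / x ^ 2) := fun x hx => (hJd x hx).deriv
  have hx₀' : ∀ x : ℝ, x > x₀ → 0 < x := fun x hx => lt_trans hx₀ hx
  have hphipos : ∀ x > x₀, 0 < φ x := by
    intro x hx
    have hx0 := hx₀' x hx
    have h := hJ' x hx
    rw [hJdval x hx0] at h
    have h2 : 0 < J x * (φ x / x ^ 2) * x ^ 2 := mul_pos h (pow_pos hx0 2)
    have h3 : J x * (φ x / x ^ 2) * x ^ 2 = J x * φ x := by field_simp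
    rw [h3] at h2
    nlinarith [hJpos x hx0]
  have hlogJ : ∀ x > (0:ℝ), Real.log (J x) = L x / x := by
    intro x hx; rw [hJexp x hx, Real.log_exp]
  have huLd : ∀ x > (0:ℝ), HasDerivAt (fun y => L y / y) (φ x / x ^ 2) x := by
    intro x hx
    have h1 := (hL1 x hx).div (hasDerivAt_id x) hx.ne'
    convert h1 using 1
    · rfl
    · rfl
    · rfl
    rw [hφdef]
    simp only [id_eq]
    ring
  have hJsq : ∀ N > (0:ℝ), (J N) ^ 2 = Real.exp (2 * L N / N) := by
    intro N hN
    rw [hJexp N hN, ← Real.exp_nat_mul]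
    norm_num
    ring_nf
  -- D and G
  set D : ℝ → ℝ := fun N => 2 * L N / N + Real.log (φ N) + 2 * φ N / N with hDdef
  set G : ℝ → ℝ := fun N => φ N * (J N) ^ 2 * Real.exp (2 * φ N / N) with hGdef
  clear_value D G
  have hGform : ∀ N > (0:ℝ),
      N ^ 2 * J N * deriv J N * Real.exp (2 * N * deriv J N / J N) = G N := by
    intro N hN
    rw [hJdval N hN, hGdef]
    have hJN := (hJpos N hN).ne'
    have h1 : 2 * N * (J N * (φ N / N ^ 2)) / J N = 2 * φ N / N := by
      field_simp
    rw [h1]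
    field_simp
  have hGD : ∀ N > x₀, G N = Real.exp (D N) := by
    intro N hN
    have hN0 := hx₀' N hN
    rw [hGdef, hDdef]
    rw [Real.exp_add, Real.exp_add, Real.exp_log (hphipos N hN)]
    simp only
    rw [hJsq N hN0]
    ring
  have hGpos : ∀ N > x₀, 0 < G N := by
    intro N hN; rw [hGD N hN]; exact Real.exp_pos _
  have hDd : ∀ N > x₀, HasDerivAt D (N * deriv (deriv L) N / φ N + 2 * deriv (deriv L) N) N := by
    intro N hN
    have hN0 := hx₀' N hN
    have p1 : HasDerivAt (fun y => 2 * L y / y)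
        ((2 * deriv L N * N - 2 * L N * 1) / N ^ 2) N :=
      ((hL1 N hN0).const_mul 2).div (hasDerivAt_id N) hN0.ne'
    have p2 : HasDerivAt (fun y => Real.log (φ y)) ((N * deriv (deriv L) N) / φ N) N :=
      (hphid N hN0).log (hphipos N hN).ne'
    have p3 : HasDerivAt (fun y => 2 * φ y / y)
        ((2 * (N * deriv (deriv L) N) * N - 2 * φ N * 1) / N ^ 2) N :=
      ((hphid N hN0).const_mul 2).div (hasDerivAt_id N) hN0.ne'
    have sum := (p1.add p2).add p3
    rw [hDdef]
    convert sum using 1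
    · rfl
    · rfl
    · rfl
    have hφN := (hphipos N hN).ne'
    rw [hφdef]
    have hφN' : N * deriv L N - L N ≠ 0 := by rw [hφdef] at hφN; exact hφN
    field_simp
    ring
  have hDdpos : ∀ N > x₀, 0 < N * deriv (deriv L) N / φ N + 2 * deriv (deriv L) N := by
    intro N hN
    have hN0 := hx₀' N hN
    have := hcc N hN0
    have := hphipos N hN
    positivity
  have hDmono : StrictMonoOn D (Set.Ioi x₀) := by
    apply strictMonoOn_of_deriv_pos (convex_Ioi x₀)
    · intro N hN; exact (hDd N hN).continuousAt.continuousWithinAt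
    · intro N hN
      rw [interior_Ioi] at hN
      rw [(hDd N hN).deriv]
      exact hDdpos N hN
  have hGmono : StrictMonoOn G (Set.Ioi x₀) := by
    intro a ha b hb hab
    rw [hGD a ha, hGD b hb]
    exact Real.exp_lt_exp.2 (hDmono ha hb hab)
  -- φ is unbounded on (x₀,∞)
  have hφunb : ∀ c : ℝ, ∃ x > x₀, c < φ x := by
    by_contra hcon
    push_neg at hcon
    obtain ⟨c, hc⟩ := hcon
    set y₀ : ℝ := x₀ + 1 with hy₀def
    clear_value y₀
    have hy₀ : x₀ < y₀ := by rw [hy₀def]; linarith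
    have hy₀0 : 0 < y₀ := by linarith
    have hcpos : 0 < c := lt_of_lt_of_le (hphipos y₀ hy₀) (hc y₀ hy₀)
    have hB1 : ∀ x ∈ Ici y₀, L x / x ≤ L y₀ / y₀ + c / y₀ := by
      apply my_bdd_of_deriv_le (fun y => L y / y) (fun x => φ x / x ^ 2) y₀ c hy₀0 hcpos.le
      · intro x hx; exact huLd x (lt_of_lt_of_le hy₀0 hx)
      · intro x hx
        have hx0 : (0:ℝ) < x := lt_of_lt_of_le hy₀0 hx
        exact (div_le_div_iff_of_pos_right (pow_pos hx0 2)).2 (hc x (lt_of_lt_of_le hy₀ hx))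
    set B1 : ℝ := L y₀ / y₀ + c / y₀ with hB1def
    clear_value B1
    have htail : ∀ N ∈ Ici y₀, G N ≤ c * Real.exp (2 * B1) * Real.exp (2 * c / y₀) := by
      intro N hN
      have hNx₀ : x₀ < N := lt_of_lt_of_le hy₀ hN
      have hN0 : (0:ℝ) < N := hx₀' N hNx₀
      have h1 : φ N ≤ c := hc N hNx₀
      have h2 : (J N) ^ 2 ≤ Real.exp (2 * B1) := by
        rw [hJsq N hN0]
        apply Real.exp_le_exp.2
        have := hB1 N hN
        have : 2 * L N / N = 2 * (L N / N) := by ring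
        rw [this]
        linarith [hB1 N hN]
      have h3 : Real.exp (2 * φ N / N) ≤ Real.exp (2 * c / y₀) := by
        apply Real.exp_le_exp.2
        rw [div_le_div_iff₀ hN0 hy₀0]
        have hφp := hphipos N hNx₀
        have hNy : y₀ ≤ N := hN
        nlinarith [mul_le_mul_of_nonneg_left hNy (by linarith : (0:ℝ) ≤ 2 * c)]
      have hG : G N = φ N * (J N) ^ 2 * Real.exp (2 * φ N / N) := by rw [hGdef]
      rw [hG]
      apply mul_le_mul _ h3 (Real.exp_pos _).le (by positivity)
      apply mul_le_mul h1 h2 (sq_nonneg _) hcpos.le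
    have hGcont : ContinuousOn G (Icc x₀ y₀) := by
      intro N hN
      have hN0 : (0:ℝ) < N := lt_of_lt_of_le hx₀ hN.1
      apply ContinuousAt.continuousWithinAt
      have cφ : ContinuousAt φ N := (hphid N hN0).continuousAt
      have cJ : ContinuousAt J N := (hJd N hN0).continuousAt
      rw [hGdef]
      exact (cφ.mul (cJ.pow 2)).mul
        (Real.continuous_exp.continuousAt.comp ((cφ.const_mul 2).div continuousAt_id hN0.ne'))
    obtain ⟨Nm, hNm, hmax⟩ := isCompact_Icc.exists_isMaxOn
      ⟨x₀, left_mem_Icc.2 (by linarith : x₀ ≤ y₀)⟩ hGcont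
    set k : ℝ := max (max k₀ (c * Real.exp (2 * B1) * Real.exp (2 * c / y₀))) (G Nm) + 1
      with hkdef
    clear_value k
    have hk : k₀ < k := by
      have h1 := le_max_left k₀ (c * Real.exp (2 * B1) * Real.exp (2 * c / y₀))
      have h2 := le_max_left (max k₀ (c * Real.exp (2 * B1) * Real.exp (2 * c / y₀))) (G Nm)
      rw [hkdef]; linarith
    obtain ⟨hNk, hEq⟩ := hNfun k hk
    rw [hGform (Nfun k) (hx₀' _ hNk)] at hEq
    rcases le_or_gt (Nfun k) y₀ with hle | hlt
    · have hB : G (Nfun k) ≤ G Nm := hmax ⟨le_of_lt hNk, hle⟩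
      rw [hEq] at hB
      have h2 := le_max_right (max k₀ (c * Real.exp (2 * B1) * Real.exp (2 * c / y₀))) (G Nm)
      rw [hkdef] at hB; linarith
    · have hB : G (Nfun k) ≤ c * Real.exp (2 * B1) * Real.exp (2 * c / y₀) :=
        htail _ (le_of_lt hlt)
      rw [hEq] at hB
      have h1 := le_max_right k₀ (c * Real.exp (2 * B1) * Real.exp (2 * c / y₀))
      have h2 := le_max_left (max k₀ (c * Real.exp (2 * B1) * Real.exp (2 * c / y₀))) (G Nm)
      rw [hkdef] at hB; linarith
  have hφtend : Tendsto φ atTop atTop := by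
    apply tendsto_atTop.2
    intro b
    obtain ⟨x, hx, hbx⟩ := hφunb b
    filter_upwards [eventually_ge_atTop x] with y hy
    have hx0 : (0:ℝ) < x := hx₀' x hx
    have : φ x ≤ φ y :=
      hphimono.monotoneOn (mem_Ioi.2 hx0) (mem_Ioi.2 (lt_of_lt_of_le hx0 hy)) hy
    linarith
  -- J is monotone past x₀
  have hJmono : StrictMonoOn J (Set.Ioi x₀) := by
    apply strictMonoOn_of_deriv_pos (convex_Ioi x₀)
    · intro x hx; exact (hJd x (hx₀' x hx)).continuousAt.continuousWithinAt
    · intro x hx; rw [interior_Ioi] at hx; exact hJ' x hx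
  set m : ℝ := Real.log (J (x₀ + 1)) with hmdef
  clear_value m
  have hJlb : ∀ N, x₀ + 1 ≤ N → m ≤ L N / N := by
    intro N hN
    have hN0 : (0:ℝ) < N := by linarith
    rw [← hlogJ N hN0, hmdef]
    apply Real.log_le_log (hJpos (x₀+1) (by linarith))
    exact hJmono.monotoneOn (mem_Ioi.2 (by linarith)) (mem_Ioi.2 (by linarith)) hN
  obtain ⟨x₂, hx₂⟩ := eventually_atTop.1 (tendsto_atTop.1 hφtend (Real.exp (2 + 2*|m|)))
  set N₂ : ℝ := max x₂ (x₀ + 1) with hN₂def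
  clear_value N₂
  have hN₂x₀ : x₀ < N₂ := by rw [hN₂def]; exact lt_of_lt_of_le (by linarith) (le_max_right _ _)
  have hN₂x₂ : x₂ ≤ N₂ := by rw [hN₂def]; exact le_max_left _ _
  have hN₂x₀1 : x₀ + 1 ≤ N₂ := by rw [hN₂def]; exact le_max_right _ _
  have hlogφ : ∀ N, N₂ ≤ N → 2 + 2*|m| ≤ Real.log (φ N) := by
    intro N hN
    have hNx₀ : x₀ < N := lt_of_lt_of_le hN₂x₀ hN
    rw [Real.le_log_iff_exp_le (hphipos N hNx₀)]
    exact hx₂ N (le_trans hN₂x₂ hN)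
  have hDpos2 : ∀ N, N₂ ≤ N → 0 < D N := by
    intro N hN
    have hNx₀ : x₀ < N := lt_of_lt_of_le hN₂x₀ hN
    have hN0 := hx₀' N hNx₀
    have h1 := hJlb N (le_trans hN₂x₀1 hN)
    have h2 := hlogφ N hN
    have h3 : 0 < 2 * φ N / N := div_pos (by linarith [hphipos N hNx₀]) hN0
    have habs : -|m| ≤ m := neg_abs_le m
    have hD : D N = 2 * L N / N + Real.log (φ N) + 2 * φ N / N := by rw [hDdef]
    rw [hD]
    have h4 : 2 * L N / N = 2 * (L N / N) := by ring
    rw [h4]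
    nlinarith
  have hnum : ∀ N, N₂ ≤ N → 0 < 2 * L N / N + Real.log (φ N) - 1 := by
    intro N hN
    have hNx₀ : x₀ < N := lt_of_lt_of_le hN₂x₀ hN
    have hN0 := hx₀' N hNx₀
    have h1 := hJlb N (le_trans hN₂x₀1 hN)
    have h2 := hlogφ N hN
    have habs : -|m| ≤ m := neg_abs_le m
    have h4 : 2 * L N / N = 2 * (L N / N) := by ring
    rw [h4]
    nlinarith
  set E : ℝ → ℝ := fun N => φ N / D N with hEdef
  clear_value E
  have hEd : ∀ N, N₂ < N →
      HasDerivAt E ((N * deriv (deriv L) N) * (2 * L N / N + Real.log (φ N) - 1) / (D N)^2) N := by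
    intro N hN
    have hNx₀ : x₀ < N := lt_trans hN₂x₀ hN
    have hN0 := hx₀' N hNx₀
    have hDne : D N ≠ 0 := (hDpos2 N hN.le).ne'
    have h := (hphid N hN0).div (hDd N hNx₀) hDne
    rw [hEdef]
    convert h using 1
    · rfl
    · rfl
    · rfl
    have hφne : φ N ≠ 0 := (hphipos N hNx₀).ne'
    have hDval : D N = 2 * L N / N + Real.log (φ N) + 2 * φ N / N := by rw [hDdef]
    congr 1
    rw [hDval]
    field_simp
    ring
  have hEmono : StrictMonoOn E (Set.Ioi N₂) := by
    apply strictMonoOn_of_deriv_pos (convex_Ioi N₂)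
    · intro N hN; exact (hEd N hN).continuousAt.continuousWithinAt
    · intro N hN
      rw [interior_Ioi] at hN
      rw [(hEd N hN).deriv]
      have hNx₀ : x₀ < N := lt_trans hN₂x₀ hN
      have hN0 := hx₀' N hNx₀
      exact div_pos (mul_pos (mul_pos hN0 (hcc N hN0)) (hnum N hN.le))
        (pow_pos (hDpos2 N hN.le) 2)
  -- E is unbounded
  have hEunb : ∀ b : ℝ, ∃ N, N₂ < N ∧ b < E N := by
    by_contra hcon
    push_neg at hcon
    obtain ⟨ℓ₀, hℓ₀⟩ := hcon
    set ℓ : ℝ := max ℓ₀ 1 with hℓdef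
    clear_value ℓ
    have hℓ1 : (1:ℝ) ≤ ℓ := by rw [hℓdef]; exact le_max_right _ _
    have hℓ0 : ℓ₀ ≤ ℓ := by rw [hℓdef]; exact le_max_left _ _
    have hℓpos : (0:ℝ) < ℓ := by linarith
    have hφD : ∀ N, N₂ < N → φ N ≤ ℓ * D N := by
      intro N hN
      have h1 : E N ≤ ℓ := le_trans (hℓ₀ N hN) hℓ0
      have h2 := hDpos2 N hN.le
      have h3 : E N = φ N / D N := by rw [hEdef]
      rw [h3] at h1
      calc φ N = (φ N / D N) * D N := by field_simp
        _ ≤ ℓ * D N := mul_le_mul_of_nonneg_right h1 h2.le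
    obtain ⟨x₃, hx₃⟩ := eventually_atTop.1 (tendsto_atTop.1 hφtend (256 * ℓ^2))
    set N₃ : ℝ := max (max x₃ (16*ℓ)) (N₂+1) with hN₃def
    clear_value N₃
    have hN₃N₂ : N₂ < N₃ := by
      rw [hN₃def]; exact lt_of_lt_of_le (by linarith) (le_max_right _ _)
    have hN₃x₃ : x₃ ≤ N₃ := by
      rw [hN₃def]; exact le_trans (le_max_left _ _) (le_max_left _ _)
    have hN₃16 : 16*ℓ ≤ N₃ := by
      rw [hN₃def]; exact le_trans (le_max_right _ _) (le_max_left _ _)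
    have key : ∀ N, N₃ < N → φ N ≤ (8*ℓ/3) * (L N / N) ∧ 96 * ℓ ≤ L N / N := by
      intro N hN
      have hNN₂ : N₂ < N := lt_trans hN₃N₂ hN
      have hNx₀ : x₀ < N := lt_trans hN₂x₀ hNN₂
      have hN0 := hx₀' N hNx₀
      have hφ256 : 256*ℓ^2 ≤ φ N := hx₃ N (le_of_lt (lt_of_le_of_lt hN₃x₃ hN))
      have hφp := hphipos N hNx₀
      have hs : 16*ℓ ≤ Real.sqrt (φ N) := by
        rw [Real.le_sqrt' (by linarith)]
        have : (16*ℓ)^2 = 256*ℓ^2 := by ring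
        linarith
      have hsq := Real.sq_sqrt hφp.le
      have hlogle : Real.log (φ N) ≤ φ N / (8*ℓ) := by
        have h1 := my_log_le_two_sqrt hφp
        have h2 : 2 * Real.sqrt (φ N) ≤ φ N / (8*ℓ) := by
          rw [le_div_iff₀ (by linarith : (0:ℝ) < 8*ℓ)]
          calc 2*Real.sqrt (φ N)*(8*ℓ) = Real.sqrt (φ N) * (16*ℓ) := by ring
            _ ≤ Real.sqrt (φ N) * Real.sqrt (φ N) :=
                mul_le_mul_of_nonneg_left hs (Real.sqrt_nonneg _)
            _ = φ N := Real.mul_self_sqrt hφp.le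
        linarith
      have h16 : 16*ℓ ≤ N := le_of_lt (lt_of_le_of_lt hN₃16 hN)
      have hφNle : 2 * φ N / N ≤ φ N / (8*ℓ) := by
        rw [div_le_div_iff₀ hN0 (by linarith : (0:ℝ) < 8*ℓ)]
        calc 2*φ N*(8*ℓ) = φ N*(16*ℓ) := by ring
          _ ≤ φ N * N := mul_le_mul_of_nonneg_left h16 hφp.le
      have hD := hφD N hNN₂
      have hDval : D N = 2*(L N/N) + Real.log (φ N) + 2*φ N/N := by rw [hDdef]; ring
      rw [hDval] at hD
      have e1 : ℓ * Real.log (φ N) ≤ φ N / 8 := by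
        have h := mul_le_mul_of_nonneg_left hlogle hℓpos.le
        have h2 : ℓ * (φ N / (8*ℓ)) = φ N / 8 := by field_simp
        rw [h2] at h
        linarith
      have e2 : ℓ * (2 * φ N / N) ≤ φ N / 8 := by
        have h := mul_le_mul_of_nonneg_left hφNle hℓpos.le
        have h2 : ℓ * (φ N / (8*ℓ)) = φ N / 8 := by field_simp
        rw [h2] at h
        linarith
      have hstep : φ N ≤ 2*ℓ*(L N/N) + φ N/4 := by
        have hexp : ℓ * (2*(L N/N) + Real.log (φ N) + 2*φ N/N)
            = 2*ℓ*(L N/N) + ℓ * Real.log (φ N) + ℓ * (2 * φ N / N) := by ring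
        rw [hexp] at hD
        linarith
      have e3 : 192*ℓ^2 ≤ 2*ℓ*(L N/N) := by
        calc 192*ℓ^2 = (3/4)*(256*ℓ^2) := by ring
          _ ≤ (3/4)*(φ N) := by linarith
          _ ≤ 2*ℓ*(L N/N) := by linarith
      have hLpos : 96*ℓ ≤ L N/N := by
        by_contra hcon2
        push_neg at hcon2
        have hm := mul_lt_mul_of_pos_left hcon2 (by linarith : (0:ℝ) < 2*ℓ)
        have h2 : 2*ℓ*(96*ℓ) = 192*ℓ^2 := by ring
        nlinarith [hm]
      refine ⟨?_, hLpos⟩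
      have e4 : 3 * φ N ≤ 4 * (2*ℓ*(L N/N)) := by linarith
      have e5 : 2*ℓ*(L N/N) = (3/4) * ((8*ℓ/3) * (L N/N)) := by ring
      rw [e5] at e4
      linarith
    set a : ℝ := N₃ + 1 with hadef
    clear_value a
    have hx₀N₃ : x₀ < N₃ := lt_trans hN₂x₀ hN₃N₂
    have ha0 : 0 < a := by have := hx₀; linarith
    have hψd : ∀ x ∈ Ici a, HasDerivAt (fun y => Real.log (L y / y)) ((φ x / x^2) / (L x / x)) x := by
      intro x hx
      have hxa : a ≤ x := hx
      have hxN₃ : N₃ < x := by linarith [hxa]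
      have hx0 : 0 < x := by linarith
      have hL := (key x hxN₃).2
      exact (huLd x hx0).log (by nlinarith : L x / x ≠ 0)
    have hψle : ∀ x ∈ Ici a, (φ x / x^2) / (L x / x) ≤ (8*ℓ/3)/x^2 := by
      intro x hx
      have hxa : a ≤ x := hx
      have hxN₃ : N₃ < x := by linarith [hxa]
      have hx0 : 0 < x := by linarith
      have hL := (key x hxN₃).2
      have hLpos : 0 < L x / x := by nlinarith
      have heq : (φ x / x^2) / (L x / x) = (φ x / (L x / x)) / x^2 := by ring
      rw [heq]
      have h1 : φ x / (L x / x) ≤ 8*ℓ/3 := (div_le_iff₀ hLpos).2 (by linarith [(key x hxN₃).1])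
      gcongr
    have hbd := my_bdd_of_deriv_le (fun y => Real.log (L y / y))
      (fun x => (φ x / x^2)/(L x / x)) a (8*ℓ/3) ha0 (by positivity) hψd hψle
    obtain ⟨x₄, hx₄⟩ := eventually_atTop.1 (tendsto_atTop.1 hφtend
      ((8*ℓ/3) * Real.exp (Real.log (L a / a) + (8*ℓ/3)/a) + 1))
    set y : ℝ := max x₄ a with hydef
    clear_value y
    have hya : a ≤ y := by rw [hydef]; exact le_max_right _ _
    have hyx₄ : x₄ ≤ y := by rw [hydef]; exact le_max_left _ _
    have hyN₃ : N₃ < y := by linarith [hya]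
    have h1 : Real.log (L y / y) ≤ Real.log (L a / a) + (8*ℓ/3)/a := hbd y hya
    have hL0 : 0 < L y / y := by nlinarith [(key y hyN₃).2]
    have h2 : L y / y ≤ Real.exp (Real.log (L a / a) + (8*ℓ/3)/a) := by
      rw [← Real.exp_log hL0]
      exact Real.exp_le_exp.2 h1
    have h3 : φ y ≤ (8*ℓ/3) * (L y / y) := (key y hyN₃).1
    have h4 := hx₄ y hyx₄
    nlinarith [Real.exp_pos (Real.log (L a / a) + (8*ℓ/3)/a)]
  have hEtend : Tendsto E atTop atTop := by
    apply tendsto_atTop.2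
    intro b
    obtain ⟨N, hN, hb⟩ := hEunb b
    filter_upwards [eventually_ge_atTop N] with y hy
    have hEy : E N ≤ E y := by
      rcases eq_or_lt_of_le hy with rfl | h
      · exact le_refl _
      · exact (hEmono (mem_Ioi.2 hN) (mem_Ioi.2 (lt_trans hN h)) h).le
    linarith
  -- final assembly
  have hNgt : ∀ T, x₀ < T → ∀ k, max k₀ (G T) < k → T < Nfun k := by
    intro T hT k hk
    have hkk₀ : k₀ < k := lt_of_le_of_lt (le_max_left _ _) hk
    obtain ⟨hNk, hEq⟩ := hNfun k hkk₀
    rw [hGform (Nfun k) (hx₀' _ hNk)] at hEq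
    by_contra hcon
    push_neg at hcon
    have hle : G (Nfun k) ≤ G T := hGmono.monotoneOn (mem_Ioi.2 hNk) (mem_Ioi.2 hT) hcon
    rw [hEq] at hle
    have := le_max_right k₀ (G T)
    linarith
  have hfeq : ∀ k, k₀ < k → N₂ < Nfun k → f k = Real.sqrt (E (Nfun k)) := by
    intro k hk hNk₂
    obtain ⟨hNk, hEq⟩ := hNfun k hk
    have hN0 : 0 < Nfun k := hx₀' _ hNk
    rw [hGform (Nfun k) hN0, hGD (Nfun k) hNk] at hEq
    have hlogk : Real.log k = D (Nfun k) := by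
      conv_rhs => rw [← Real.log_exp (D (Nfun k))]
      rw [hEq]
    have hratio : deriv J (Nfun k) / J (Nfun k) = φ (Nfun k) / (Nfun k)^2 := by
      rw [hJdval (Nfun k) hN0]
      have h1 : J (Nfun k) ≠ 0 := (hJpos _ hN0).ne'
      field_simp
    have hEval : E (Nfun k) = φ (Nfun k) / D (Nfun k) := by rw [hEdef]
    rw [hf k, hlogk, hratio, hEval]
    rw [Real.sqrt_div (hphipos _ hNk).le, Real.sqrt_sq hN0.le]
    rw [Real.sqrt_div (hphipos _ hNk).le]
    have hcancel : Nfun k * (Real.sqrt (φ (Nfun k)) / Nfun k) = Real.sqrt (φ (Nfun k)) := by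
      field_simp
    rw [hcancel]
  set k₁ : ℝ := max k₀ (G (N₂+1)) + 1 with hk₁def
  clear_value k₁
  have hk₁k₀ : k₀ < k₁ := by
    rw [hk₁def]
    have := le_max_left k₀ (G (N₂+1))
    linarith
  have hNk₁ : ∀ k, k₁ < k → N₂ + 1 < Nfun k := by
    intro k hk
    apply hNgt (N₂+1) (by linarith) k
    rw [hk₁def] at hk
    linarith
  have hmain : ∀ k, k₁ < k → f k = Real.sqrt (E (Nfun k)) := by
    intro k hk
    exact hfeq k (lt_trans hk₁k₀ hk) (by linarith [hNk₁ k hk])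
  constructor
  · have hNtend : Tendsto Nfun atTop atTop := by
      apply tendsto_atTop.2
      intro T
      filter_upwards [eventually_gt_atTop (max k₀ (G (max T (x₀+1))))] with k hk
      have h := hNgt (max T (x₀+1))
        (lt_of_lt_of_le (by linarith) (le_max_right _ _)) k hk
      have h2 : T ≤ max T (x₀+1) := le_max_left _ _
      linarith
    have h1 : Tendsto (fun k => Real.sqrt (E (Nfun k))) atTop atTop :=
      my_sqrt_tendsto.comp (hEtend.comp hNtend)
    refine Filter.Tendsto.congr' ?_ h1
    filter_upwards [eventually_gt_atTop k₁] with k hk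
    exact (hmain k hk).symm
  · refine ⟨k₁, hk₁k₀, ?_⟩
    intro p hp q hq hpq
    simp only [mem_Ioi] at hp hq
    have hNp := hNk₁ p hp
    have hNq := hNk₁ q hq
    obtain ⟨hNp', hEqp⟩ := hNfun p (lt_trans hk₁k₀ hp)
    obtain ⟨hNq', hEqq⟩ := hNfun q (lt_trans hk₁k₀ hq)
    rw [hGform _ (hx₀' _ hNp'), hGD _ hNp'] at hEqp
    rw [hGform _ (hx₀' _ hNq'), hGD _ hNq'] at hEqq
    have hppos : 0 < p := by rw [← hEqp]; exact Real.exp_pos _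
    have hlog : D (Nfun p) < D (Nfun q) := by
      have hll := Real.log_lt_log hppos hpq
      rw [← hEqp, ← hEqq, Real.log_exp, Real.log_exp] at hll
      exact hll
    have hNpq : Nfun p < Nfun q := by
      by_contra hcon
      push_neg at hcon
      have := hDmono.monotoneOn (mem_Ioi.2 hNq') (mem_Ioi.2 hNp') hcon
      linarith
    have hE : E (Nfun p) < E (Nfun q) :=
      hEmono (mem_Ioi.2 (by linarith)) (mem_Ioi.2 (by linarith)) hNpq
    rw [hmain p hp, hmain q hq]
    apply Real.sqrt_lt_sqrt ?_ hE
    have h1 : E (Nfun p) = φ (Nfun p) / D (Nfun p) := by rw [hEdef]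
    rw [h1]
    exact div_nonneg (hphipos _ hNp').le (hDpos2 _ (by linarith)).le
end

section
/- For all sufficiently large k (in particular, large enough that 4·√k/log k ≥ g(x₀) and k > k₀), one has f(k)² ≥ (1/4)·g⁻¹(4·√k/log k), where g⁻¹ denotes the inverse of the restriction of g to [x₀,∞). -/
open Real Set

section Aux
variable {M J : ℝ → ℝ}

lemma aux_hasDerivAt_L (hMpos : ∀ x > (0:ℝ), 0 < M x)
    (hMsmooth : ContDiffOn ℝ 2 M (Set.Ioi 0)) {x : ℝ} (hx : 0 < x) :
    HasDerivAt (fun y => Real.log (M y)) (deriv (fun y => Real.log (M y)) x) x := by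
  have hMd : DifferentiableAt ℝ M x :=
    (hMsmooth.contDiffAt (isOpen_Ioi.mem_nhds hx)).differentiableAt (by norm_num)
  exact (hMd.log (hMpos x hx).ne').hasDerivAt

lemma aux_hasDerivAt_G
    (hlogconv : ∀ x > (0 : ℝ), 0 < deriv (deriv (fun y => Real.log (M y))) x)
    {x : ℝ} (hx : 0 < x) :
    HasDerivAt (deriv (fun y => Real.log (M y)))
      (deriv (deriv (fun y => Real.log (M y))) x) x :=
  (differentiableAt_of_deriv_ne_zero (hlogconv x hx).ne').hasDerivAt

lemma aux_G_mono
    (hlogconv : ∀ x > (0 : ℝ), 0 < deriv (deriv (fun y => Real.log (M y))) x) :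
    StrictMonoOn (deriv (fun y => Real.log (M y))) (Set.Ioi 0) := by
  apply strictMonoOn_of_deriv_pos (convex_Ioi 0)
  · exact fun x hx =>
      ((aux_hasDerivAt_G hlogconv hx).differentiableAt).continuousAt.continuousWithinAt
  · rw [interior_Ioi]; exact fun x hx => hlogconv x hx

/-- `h x = x * G x - L x` is strictly monotone on `(0,∞)`. -/
lemma aux_hh_mono (hMpos : ∀ x > (0:ℝ), 0 < M x)
    (hMsmooth : ContDiffOn ℝ 2 M (Set.Ioi 0))
    (hlogconv : ∀ x > (0 : ℝ), 0 < deriv (deriv (fun y => Real.log (M y))) x) :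
    StrictMonoOn
      (fun x => x * deriv (fun y => Real.log (M y)) x - Real.log (M x)) (Set.Ioi 0) := by
  have key : ∀ x ∈ Set.Ioi (0:ℝ), HasDerivAt
      (fun x => x * deriv (fun y => Real.log (M y)) x - Real.log (M x))
      (x * deriv (deriv (fun y => Real.log (M y))) x) x := by
    intro x hx
    have h1 := (hasDerivAt_id x).mul (aux_hasDerivAt_G hlogconv hx)
    have h2 := h1.sub (aux_hasDerivAt_L hMpos hMsmooth hx)
    refine h2.congr_deriv ?_
    simp only [id_eq]
    ring
  apply strictMonoOn_of_deriv_pos (convex_Ioi 0)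
  · exact fun x hx => (key x hx).differentiableAt.continuousAt.continuousWithinAt
  · rw [interior_Ioi]
    intro x hx
    rw [(key x hx).deriv]
    exact mul_pos hx (hlogconv x hx)

lemma aux_J_eq (hMpos : ∀ x > (0:ℝ), 0 < M x)
    (hJ : ∀ x > (0 : ℝ), J x = M x ^ (1 / x)) {x : ℝ} (hx : 0 < x) :
    J x = Real.exp (Real.log (M x) / x) := by
  rw [hJ x hx, Real.rpow_def_of_pos (hMpos x hx), mul_one_div]

lemma aux_hasDerivAt_J (hMpos : ∀ x > (0:ℝ), 0 < M x)
    (hMsmooth : ContDiffOn ℝ 2 M (Set.Ioi 0))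
    (hJ : ∀ x > (0 : ℝ), J x = M x ^ (1 / x)) {x : ℝ} (hx : 0 < x) :
    HasDerivAt J
      (J x * ((x * deriv (fun y => Real.log (M y)) x - Real.log (M x)) / x ^ 2)) x := by
  have hL := aux_hasDerivAt_L hMpos hMsmooth hx
  have hdiv := hL.div (hasDerivAt_id x) hx.ne'
  have hF := hdiv.exp
  have hEq : (fun y => Real.exp (Real.log (M y) / y)) =ᶠ[nhds x] J := by
    filter_upwards [isOpen_Ioi.mem_nhds hx] with y hy
    exact (aux_J_eq hMpos hJ hy).symm
  have := hF.congr_of_eventuallyEq hEq.symm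
  refine this.congr_deriv ?_
  rw [aux_J_eq hMpos hJ hx]
  simp only [id_eq, Pi.div_apply]
  ring

/-- Tangent line inequality for the convex function `L = log ∘ M`. -/
lemma aux_tangent (hMpos : ∀ x > (0:ℝ), 0 < M x)
    (hMsmooth : ContDiffOn ℝ 2 M (Set.Ioi 0))
    (hlogconv : ∀ x > (0 : ℝ), 0 < deriv (deriv (fun y => Real.log (M y))) x)
    {N y : ℝ} (hN : 0 < N) (hy : 0 < y) :
    Real.log (M N) + deriv (fun z => Real.log (M z)) N * (y - N) ≤ Real.log (M y) := by
  set G := deriv (fun z => Real.log (M z)) with hG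
  rcases lt_trichotomy y N with hlt | heq | hgt
  · -- y < N : φ(w) = L w − G N * w is antitone on [y, N]
    have key : ∀ w ∈ Set.Icc y N, HasDerivAt (fun w => Real.log (M w) - G N * w)
        (G w - G N) w := by
      intro w hw
      have hw0 : 0 < w := lt_of_lt_of_le hy hw.1
      have := (aux_hasDerivAt_L hMpos hMsmooth hw0).sub ((hasDerivAt_id w).const_mul (G N))
      exact this.congr_deriv (by simp [hG])
    have hanti : AntitoneOn (fun w => Real.log (M w) - G N * w) (Set.Icc y N) := by
      apply antitoneOn_of_deriv_nonpos (convex_Icc y N)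
      · exact fun w hw => (key w hw).differentiableAt.continuousAt.continuousWithinAt
      · intro w hw
        rw [interior_Icc] at hw
        exact ((key w ⟨hw.1.le, hw.2.le⟩).differentiableAt).differentiableWithinAt
      · intro w hw
        rw [interior_Icc] at hw
        rw [(key w ⟨hw.1.le, hw.2.le⟩).deriv]
        have hw0 : 0 < w := lt_trans hy hw.1
        have := (aux_G_mono hlogconv) (Set.mem_Ioi.mpr hw0) (Set.mem_Ioi.mpr hN) hw.2
        linarith
    have := hanti (Set.left_mem_Icc.mpr hlt.le) (Set.right_mem_Icc.mpr hlt.le) hlt.le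
    simp only at this
    nlinarith [this]
  · subst heq; simp
  · -- N < y : φ monotone on [N, y]
    have key : ∀ w ∈ Set.Icc N y, HasDerivAt (fun w => Real.log (M w) - G N * w)
        (G w - G N) w := by
      intro w hw
      have hw0 : 0 < w := lt_of_lt_of_le hN hw.1
      have := (aux_hasDerivAt_L hMpos hMsmooth hw0).sub ((hasDerivAt_id w).const_mul (G N))
      exact this.congr_deriv (by simp [hG])
    have hmono : MonotoneOn (fun w => Real.log (M w) - G N * w) (Set.Icc N y) := by
      apply monotoneOn_of_deriv_nonneg (convex_Icc N y)
      · exact fun w hw => (key w hw).differentiableAt.continuousAt.continuousWithinAt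
      · intro w hw
        rw [interior_Icc] at hw
        exact ((key w ⟨hw.1.le, hw.2.le⟩).differentiableAt).differentiableWithinAt
      · intro w hw
        rw [interior_Icc] at hw
        rw [(key w ⟨hw.1.le, hw.2.le⟩).deriv]
        have hw0 : 0 < w := lt_trans hN hw.1
        have := (aux_G_mono hlogconv) (Set.mem_Ioi.mpr hN) (Set.mem_Ioi.mpr hw0) hw.1
        linarith
    have := hmono (Set.left_mem_Icc.mpr hgt.le) (Set.right_mem_Icc.mpr hgt.le) hgt.le
    simp only at this
    nlinarith [this]

/-- ψ(w) = (L w + u)/w is antitone on [x₀, N] when u = h N. -/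
lemma aux_psi_bound (hMpos : ∀ x > (0:ℝ), 0 < M x)
    (hMsmooth : ContDiffOn ℝ 2 M (Set.Ioi 0))
    (hlogconv : ∀ x > (0 : ℝ), 0 < deriv (deriv (fun y => Real.log (M y))) x)
    {x₀ N : ℝ} (hx₀ : 0 < x₀) (hN : x₀ ≤ N) :
    (Real.log (M N) + (N * deriv (fun y => Real.log (M y)) N - Real.log (M N))) / N ≤
      (Real.log (M x₀) + (N * deriv (fun y => Real.log (M y)) N - Real.log (M N))) / x₀ := by
  set u := N * deriv (fun y => Real.log (M y)) N - Real.log (M N) with hu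
  have hNpos : 0 < N := lt_of_lt_of_le hx₀ hN
  have key : ∀ w ∈ Set.Icc x₀ N, HasDerivAt (fun w => (Real.log (M w) + u) / w)
      ((w * deriv (fun y => Real.log (M y)) w - Real.log (M w) - u) / w ^ 2) w := by
    intro w hw
    have hw0 : 0 < w := lt_of_lt_of_le hx₀ hw.1
    have := ((aux_hasDerivAt_L hMpos hMsmooth hw0).add_const u).div (hasDerivAt_id w) hw0.ne'
    refine this.congr_deriv ?_
    simp only [id_eq]
    ring
  have hanti : AntitoneOn (fun w => (Real.log (M w) + u) / w) (Set.Icc x₀ N) := by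
    apply antitoneOn_of_deriv_nonpos (convex_Icc x₀ N)
    · exact fun w hw => (key w hw).differentiableAt.continuousAt.continuousWithinAt
    · intro w hw
      rw [interior_Icc] at hw
      exact ((key w ⟨hw.1.le, hw.2.le⟩).differentiableAt).differentiableWithinAt
    · intro w hw
      rw [interior_Icc] at hw
      rw [(key w ⟨hw.1.le, hw.2.le⟩).deriv]
      have hw0 : 0 < w := lt_trans hx₀ hw.1
      apply div_nonpos_of_nonpos_of_nonneg _ (sq_nonneg w)
      have hmono := aux_hh_mono hMpos hMsmooth hlogconv
      have := (hmono (Set.mem_Ioi.mpr hw0) (Set.mem_Ioi.mpr hNpos) hw.2).le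
      simp only at this
      simp only [hu]
      linarith
  exact hanti (Set.left_mem_Icc.mpr hN) (Set.right_mem_Icc.mpr hN) hN


set_option maxHeartbeats 1600000 in
/-- For all sufficiently large `k` (in particular, large enough that
`4·√k/log k ≥ g(x₀)` and `k > k₀`), one has `f(k)² ≥ (1/4)·g⁻¹(4·√k/log k)`, where
`g⁻¹` denotes the inverse of the restriction of `g` to `[x₀,∞)`. -/
theorem f_sq_lower_bound (M J g : ℝ → ℝ)
    (hMpos : ∀ x > (0 : ℝ), 0 < M x)
    (hMsmooth : ContDiffOn ℝ 2 M (Set.Ioi 0))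
    (hlogconv : ∀ x > (0 : ℝ), 0 < deriv (deriv (fun y => Real.log (M y))) x)
    (hJ : ∀ x > (0 : ℝ), J x = M x ^ (1 / x))
    (hJunb : ∀ B : ℝ, ∃ x > (0 : ℝ), B < J x)
    (hg : ∀ x > (0 : ℝ), g x = x * M x ^ (2 / x))
    (x₀ : ℝ) (hx₀ : 0 < x₀) (hJ' : ∀ x > x₀, 0 < deriv J x)
    (ginv : ℝ → ℝ)
    (hginv_left : ∀ x ∈ Set.Ici x₀, ginv (g x) = x)
    (hginv_right : ∀ y ∈ Set.Ici (g x₀), ginv y ∈ Set.Ici x₀ ∧ g (ginv y) = y)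
    (Nfun f : ℝ → ℝ)
    (hNfun : ∀ k : ℝ,
      x₀ ^ 2 * J x₀ * deriv J x₀ * Real.exp (2 * x₀ * deriv J x₀ / J x₀) < k →
      x₀ < Nfun k ∧
        (Nfun k) ^ 2 * J (Nfun k) * deriv J (Nfun k) *
          Real.exp (2 * Nfun k * deriv J (Nfun k) / J (Nfun k)) = k)
    (hf : ∀ k, f k = Nfun k * Real.sqrt (deriv J (Nfun k) / J (Nfun k)) /
      Real.sqrt (Real.log k)) :
    ∃ K : ℝ, ∀ k ≥ K,
      g x₀ ≤ 4 * Real.sqrt k / Real.log k ∧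
      x₀ ^ 2 * J x₀ * deriv J x₀ * Real.exp (2 * x₀ * deriv J x₀ / J x₀) < k ∧
      (1 / 4) * ginv (4 * Real.sqrt k / Real.log k) ≤ (f k) ^ 2 := by
  set k0 := x₀ ^ 2 * J x₀ * deriv J x₀ * Real.exp (2 * x₀ * deriv J x₀ / J x₀) with hk0
  set C₀ := Real.log (M x₀) / x₀ with hC₀
  set u₁ := 16 * x₀ ^ 2 + 4 * x₀ * |C₀| + 1 with hu₁
  have hJx₀ : J x₀ = Real.exp C₀ := aux_J_eq hMpos hJ hx₀
  have hJx₀pos : 0 < J x₀ := by rw [hJx₀]; exact Real.exp_pos _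
  refine ⟨max (max (k0 + 1) 3) (max ((1 + |g x₀|) ^ 4) (u₁ * (J x₀) ^ 2 * Real.exp (2 * u₁ / x₀) + 1)), ?_⟩
  intro k hk
  have hk3 : (3 : ℝ) ≤ k := le_trans (le_trans (le_max_right _ _) (le_max_left _ _)) hk
  have hkpos : 0 < k := by linarith
  have hlogk : 0 < Real.log k := Real.log_pos (by linarith)
  have hk0lt : k0 < k := by
    have : k0 + 1 ≤ k := le_trans (le_trans (le_max_left _ _) (le_max_left _ _)) hk
    linarith
  have hkB1 : (1 + |g x₀|) ^ 4 ≤ k :=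
    le_trans (le_trans (le_max_left _ _) (le_max_right _ _)) hk
  have hkB2 : u₁ * (J x₀) ^ 2 * Real.exp (2 * u₁ / x₀) + 1 ≤ k :=
    le_trans (le_trans (le_max_right _ _) (le_max_right _ _)) hk
  obtain ⟨hx₀N, hEq⟩ := hNfun k hk0lt
  set N := Nfun k with hNdef
  have hNpos : 0 < N := hx₀.trans hx₀N
  have hJN : J N = Real.exp (Real.log (M N) / N) := aux_J_eq hMpos hJ hNpos
  have hJNpos : 0 < J N := by rw [hJN]; exact Real.exp_pos _
  set u := N * deriv (fun y => Real.log (M y)) N - Real.log (M N) with hu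
  set GN := deriv (fun y => Real.log (M y)) N with hGN
  have hderivJ : deriv J N = J N * (u / N ^ 2) :=
    (aux_hasDerivAt_J hMpos hMsmooth hJ hNpos).deriv
  have hdJpos : 0 < deriv J N := hJ' N hx₀N
  have hueq : u = deriv J N * N ^ 2 / J N := by
    rw [hderivJ]; field_simp
  have hupos : 0 < u := by rw [hueq]; positivity
  -- rewrite the defining equation
  have e1 : N ^ 2 * J N * deriv J N = (J N) ^ 2 * u := by
    rw [hderivJ]; field_simp
  have e2 : 2 * N * deriv J N / J N = 2 * u / N := by
    rw [hderivJ]; field_simp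
  rw [e1, e2] at hEq
  have hkeq : (J N) ^ 2 * u * Real.exp (2 * u / N) = k := hEq
  -- k = u * exp (2 * GN)
  have hLNu : Real.log (M N) + u = N * GN := by rw [hu]; ring
  have hJNexp : (J N) ^ 2 * Real.exp (2 * u / N) = Real.exp (2 * GN) := by
    rw [hJN, sq, ← Real.exp_add, ← Real.exp_add]
    congr 1
    field_simp
    linarith [hLNu]
  have hGNk : u * Real.exp (2 * GN) = k := by
    rw [← hJNexp]; linarith [hkeq]
  -- log k expansion
  have hlogkeq : Real.log k = 2 * Real.log (J N) + Real.log u + 2 * u / N := by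
    rw [← hkeq, Real.log_mul (by positivity) (Real.exp_ne_zero _),
      Real.log_mul (by positivity) hupos.ne', Real.log_exp, Real.log_pow]
    push_cast; ring
  have hlogJN : Real.log (J N) = Real.log (M N) / N := by rw [hJN, Real.log_exp]
  -- psi bound
  have hpsi : (Real.log (M N) + u) / N ≤ (Real.log (M x₀) + u) / x₀ :=
    aux_psi_bound hMpos hMsmooth hlogconv hx₀ hx₀N.le
  rw [add_div, add_div] at hpsi
  have hlogk_le : Real.log k ≤ 2 * C₀ + 2 * u / x₀ + Real.log u := by
    rw [hlogkeq, hlogJN, hC₀]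
    have h1 : Real.log (M N) / N + u / N ≤ Real.log (M x₀) / x₀ + u / x₀ := hpsi
    have h2 : 2 * u / N = 2 * (u / N) := by ring
    have h3 : 2 * u / x₀ = 2 * (u / x₀) := by ring
    rw [h2, h3]
    linarith
  -- k ≤ u * (J x₀)^2 * exp(2u/x₀)
  have hk_le : k ≤ u * (J x₀) ^ 2 * Real.exp (2 * u / x₀) := by
    have hh1 : Real.exp (2 * C₀ + 2 * u / x₀ + Real.log u)
        = u * (J x₀) ^ 2 * Real.exp (2 * u / x₀) := by
      have e₀ : Real.exp (2 * C₀ + 2 * u / x₀ + Real.log u)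
          = Real.exp C₀ * Real.exp C₀ * Real.exp (2 * u / x₀) * u := by
        rw [Real.exp_add, Real.exp_add, Real.exp_log hupos,
          show (2:ℝ) * C₀ = C₀ + C₀ from by ring, Real.exp_add]
      rw [e₀, hJx₀]; ring
    calc k = Real.exp (Real.log k) := (Real.exp_log hkpos).symm
      _ ≤ Real.exp (2 * C₀ + 2 * u / x₀ + Real.log u) := Real.exp_le_exp.mpr hlogk_le
      _ = u * (J x₀) ^ 2 * Real.exp (2 * u / x₀) := hh1
  -- u is large
  have hu1le : u₁ ≤ u := by
    by_contra hcon
    push_neg at hcon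
    have hexple : Real.exp (2 * u / x₀) ≤ Real.exp (2 * u₁ / x₀) := by
      apply Real.exp_le_exp.mpr
      exact (div_le_div_iff_of_pos_right hx₀).mpr (by linarith)
    have step1 : u * (J x₀) ^ 2 * Real.exp (2 * u / x₀)
        ≤ u * (J x₀) ^ 2 * Real.exp (2 * u₁ / x₀) :=
      mul_le_mul_of_nonneg_left hexple (by positivity)
    have step2 : u * (J x₀) ^ 2 * Real.exp (2 * u₁ / x₀)
        < u₁ * (J x₀) ^ 2 * Real.exp (2 * u₁ / x₀) := by
      have hpos2 : (0:ℝ) < (J x₀) ^ 2 * Real.exp (2 * u₁ / x₀) := by positivity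
      calc u * (J x₀) ^ 2 * Real.exp (2 * u₁ / x₀)
          = u * ((J x₀) ^ 2 * Real.exp (2 * u₁ / x₀)) := by ring
        _ < u₁ * ((J x₀) ^ 2 * Real.exp (2 * u₁ / x₀)) :=
            mul_lt_mul_of_pos_right hcon hpos2
        _ = u₁ * (J x₀) ^ 2 * Real.exp (2 * u₁ / x₀) := by ring
    linarith
  -- √u is large
  have hsqrtu : 4 * x₀ ≤ Real.sqrt u := by
    rw [Real.le_sqrt' (by positivity)]
    have : (4 * x₀) ^ 2 = 16 * x₀ ^ 2 := by ring
    rw [this]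
    have hu₁' : 16 * x₀ ^ 2 + 4 * x₀ * |C₀| + 1 ≤ u := by rw [← hu₁]; exact hu1le
    linarith [mul_nonneg hx₀.le (abs_nonneg C₀)]
  have hlogu_le : Real.log u ≤ 2 * Real.sqrt u := by
    have h1 := Real.log_le_sub_one_of_pos (Real.sqrt_pos.mpr hupos)
    have h2 : Real.log (Real.sqrt u) = Real.log u / 2 := Real.log_sqrt hupos.le
    linarith
  have hxlogk : x₀ * Real.log k ≤ 4 * u := by
    have hexpand : x₀ * (2 * C₀ + 2 * u / x₀ + Real.log u)
        = 2 * x₀ * C₀ + 2 * u + x₀ * Real.log u := by field_simp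
    have hmul := mul_le_mul_of_nonneg_left hlogk_le hx₀.le
    rw [hexpand] at hmul
    have habs : C₀ ≤ |C₀| := le_abs_self _
    have hu₁' : 16 * x₀ ^ 2 + 4 * x₀ * |C₀| + 1 ≤ u := by rw [← hu₁]; exact hu1le
    have hb1 : 2 * x₀ * C₀ ≤ u / 2 := by
      have h := mul_le_mul_of_nonneg_left habs (show (0:ℝ) ≤ 4 * x₀ by positivity)
      linarith [sq_nonneg x₀]
    have hb2 : x₀ * Real.log u ≤ u / 2 := by
      have e1 : Real.sqrt u * Real.sqrt u = u := Real.mul_self_sqrt hupos.le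
      have h4 : 4 * x₀ * Real.sqrt u ≤ Real.sqrt u * Real.sqrt u :=
        mul_le_mul_of_nonneg_right hsqrtu (Real.sqrt_nonneg u)
      have h5 : x₀ * Real.log u ≤ x₀ * (2 * Real.sqrt u) :=
        mul_le_mul_of_nonneg_left hlogu_le hx₀.le
      rw [e1] at h4
      linarith
    linarith
  set z := 4 * u / Real.log k with hzdef
  have hzx₀ : x₀ ≤ z := by rw [hzdef, le_div_iff₀ hlogk]; linarith
  have hzpos : 0 < z := lt_of_lt_of_le hx₀ hzx₀
  -- Bullet 1 : g x₀ ≤ 4 √k / log k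
  have hbullet1 : g x₀ ≤ 4 * Real.sqrt k / Real.log k := by
    set s := Real.sqrt (Real.sqrt k) with hs
    have hsknn : 0 ≤ Real.sqrt k := Real.sqrt_nonneg k
    have hs2 : s ^ 2 = Real.sqrt k := Real.sq_sqrt hsknn
    have hs4 : s ^ 4 = k := by
      have h : s ^ 4 = (s ^ 2) ^ 2 := by ring
      rw [h, hs2, Real.sq_sqrt hkpos.le]
    have hspos : 0 < s := Real.sqrt_pos.mpr (Real.sqrt_pos.mpr hkpos)
    have hlog4s : Real.log k ≤ 4 * s := by
      have h1 : Real.log k = 4 * Real.log s := by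
        rw [← hs4, Real.log_pow]; push_cast; ring
      have h2 := Real.log_le_sub_one_of_pos hspos
      linarith
    have hA_ge_s : s ≤ 4 * Real.sqrt k / Real.log k := by
      rw [le_div_iff₀ hlogk]
      calc s * Real.log k ≤ s * (4 * s) := mul_le_mul_of_nonneg_left hlog4s hspos.le
        _ = 4 * s ^ 2 := by ring
        _ = 4 * Real.sqrt k := by rw [hs2]
    have hs_ge : 1 + |g x₀| ≤ s := by
      have ha : (0:ℝ) ≤ 1 + |g x₀| := by positivity
      have h1 : (1 + |g x₀|) ^ 2 ≤ Real.sqrt k := by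
        have h := Real.sqrt_le_sqrt hkB1
        rwa [show (1 + |g x₀|) ^ 4 = ((1 + |g x₀|) ^ 2) ^ 2 from by ring,
          Real.sqrt_sq (by positivity)] at h
      have h2 : Real.sqrt ((1 + |g x₀|) ^ 2) ≤ s := Real.sqrt_le_sqrt h1
      rwa [Real.sqrt_sq ha] at h2
    have := le_abs_self (g x₀)
    linarith
  -- g identity
  have hgid : ∀ w : ℝ, 0 < w → g w = w * (J w) ^ 2 := by
    intro w hw
    rw [hg w hw, hJ w hw, pow_two, ← Real.rpow_add (hMpos w hw)]
    congr 1
    ring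
  have hJz : J z = Real.exp (Real.log (M z) / z) := aux_J_eq hMpos hJ hzpos
  have hJzpos : 0 < J z := by rw [hJz]; exact Real.exp_pos _
  -- tangent bound at z
  have htan : Real.log (M N) + GN * (z - N) ≤ Real.log (M z) :=
    aux_tangent hMpos hMsmooth hlogconv hNpos hzpos
  have hJz_ge : Real.exp (GN - u / z) ≤ J z := by
    rw [hJz]
    apply Real.exp_le_exp.mpr
    rw [le_div_iff₀ hzpos, sub_mul, div_mul_cancel₀ _ hzpos.ne']
    have hexp2 : Real.log (M N) + GN * (z - N) = GN * z - u := by rw [hu]; ring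
    linarith
  have hJz2 : Real.exp (2 * GN - 2 * (u / z)) ≤ (J z) ^ 2 := by
    have h1 : Real.exp (GN - u / z) ^ 2 ≤ (J z) ^ 2 :=
      pow_le_pow_left₀ (Real.exp_pos _).le hJz_ge 2
    have h2 : Real.exp (GN - u / z) ^ 2 = Real.exp (2 * GN - 2 * (u / z)) := by
      rw [pow_two, ← Real.exp_add]; congr 1; ring
    linarith
  have huz : u / z = Real.log k / 4 := by
    rw [hzdef, div_div_eq_mul_div, div_eq_iff (by positivity : (4:ℝ) * u ≠ 0)]
    ring
  have hexplog : Real.exp (Real.log k / 2) = Real.sqrt k := by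
    rw [Real.sqrt_eq_rpow, Real.rpow_def_of_pos hkpos]
    congr 1
    ring
  have hgoal_gz : 4 * Real.sqrt k / Real.log k ≤ g z := by
    have hzval : z * Real.exp (2 * GN - 2 * (u / z)) = 4 * Real.sqrt k / Real.log k := by
      rw [huz]
      have hE : Real.exp (2 * GN - 2 * (Real.log k / 4))
          = Real.exp (2 * GN) / Real.exp (Real.log k / 2) := by
        rw [Real.exp_sub]
        congr 1
        ring
      rw [hE, hexplog, hzdef]
      calc 4 * u / Real.log k * (Real.exp (2 * GN) / Real.sqrt k)
          = 4 * (u * Real.exp (2 * GN)) / (Real.log k * Real.sqrt k) := by ring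
        _ = 4 * k / (Real.log k * Real.sqrt k) := by rw [hGNk]
        _ = 4 * (k / Real.sqrt k) / Real.log k := by ring
        _ = 4 * Real.sqrt k / Real.log k := by rw [Real.div_sqrt]
    calc 4 * Real.sqrt k / Real.log k = z * Real.exp (2 * GN - 2 * (u / z)) := hzval.symm
      _ ≤ z * (J z) ^ 2 := mul_le_mul_of_nonneg_left hJz2 hzpos.le
      _ = g z := (hgid z hzpos).symm
  obtain ⟨hmemA, hgA⟩ := hginv_right _ (Set.mem_Ici.mpr hbullet1)
  have hxx₀ : x₀ ≤ ginv (4 * Real.sqrt k / Real.log k) := hmemA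
  have hxpos : 0 < ginv (4 * Real.sqrt k / Real.log k) := lt_of_lt_of_le hx₀ hxx₀
  have hJmono : StrictMonoOn J (Set.Ici x₀) := by
    apply strictMonoOn_of_deriv_pos (convex_Ici x₀)
    · intro w hw
      have hw0 : 0 < w := lt_of_lt_of_le hx₀ hw
      exact (aux_hasDerivAt_J hMpos hMsmooth hJ
        hw0).differentiableAt.continuousAt.continuousWithinAt
    · rw [interior_Ici]; exact fun w hw => hJ' w hw
  have hxz : ginv (4 * Real.sqrt k / Real.log k) ≤ z := by
    by_contra hcc
    push_neg at hcc
    have hJlt : J z < J (ginv (4 * Real.sqrt k / Real.log k)) :=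
      hJmono (Set.mem_Ici.mpr hzx₀) (Set.mem_Ici.mpr hxx₀) hcc
    have hglt : g z < g (ginv (4 * Real.sqrt k / Real.log k)) := by
      rw [hgid z hzpos, hgid _ hxpos]
      have hJxpos : 0 < J (ginv (4 * Real.sqrt k / Real.log k)) := hJzpos.trans hJlt
      have hstep1 : z * J z ^ 2 ≤ z * J (ginv (4 * Real.sqrt k / Real.log k)) ^ 2 :=
        mul_le_mul_of_nonneg_left (pow_le_pow_left₀ hJzpos.le hJlt.le 2) hzpos.le
      have hstep2 : z * J (ginv (4 * Real.sqrt k / Real.log k)) ^ 2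
          < ginv (4 * Real.sqrt k / Real.log k) * J (ginv (4 * Real.sqrt k / Real.log k)) ^ 2 :=
        mul_lt_mul_of_pos_right hcc (by positivity)
      linarith
    rw [hgA] at hglt
    linarith
  have hfk : (f k) ^ 2 = u / Real.log k := by
    rw [hf k, ← hNdef, div_pow, mul_pow,
      Real.sq_sqrt (div_nonneg hdJpos.le hJNpos.le), Real.sq_sqrt hlogk.le, hueq]
    field_simp
  refine ⟨hbullet1, hk0lt, ?_⟩
  rw [hfk]
  have hzz : (1 / 4 : ℝ) * z = u / Real.log k := by rw [hzdef]; ring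
  linarith
end Aux
end

section
/- For every k > e³, the equation N·log N·e^{2/log N} = k has a unique solution N(k) in (e, ∞); setting f(k)² := N(k)/(log N(k)·log k), one has lim_{k→∞} f(k)²·(log k)³/k = 1. -/
open Real Filter Set

private lemma hfun_mono : StrictMonoOn (fun u : ℝ => u + Real.log u + 2/u) (Set.Ici 1) := by
  apply strictMonoOn_of_deriv_pos (convex_Ici 1)
  · apply ContinuousOn.add
    · exact continuousOn_id.add (Real.continuousOn_log.mono (by
        intro x hx; simp at hx ⊢; linarith))
    · apply ContinuousOn.div continuousOn_const continuousOn_id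
      intro x hx; simp at hx ⊢; linarith
  · intro u hu
    rw [interior_Ici] at hu
    have hu1 : (1:ℝ) < u := hu
    have hu0 : (0:ℝ) < u := by linarith
    have hd : HasDerivAt (fun u : ℝ => u + Real.log u + 2/u)
        (1 + u⁻¹ + 2 * (-(u^2)⁻¹)) u := by
      have h1 := (hasDerivAt_id u).add (Real.hasDerivAt_log hu0.ne')
      have h2 : HasDerivAt (fun x : ℝ => 2 / x) (2 * (-(u^2)⁻¹)) u := by
        simpa [div_eq_mul_inv] using (hasDerivAt_inv hu0.ne').const_mul (2:ℝ)
      exact h1.add h2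
    rw [hd.deriv]
    have : 1 + u⁻¹ + 2 * (-(u^2)⁻¹) = (u^2 + u - 2)/u^2 := by
      field_simp; ring
    rw [this]
    apply div_pos (by nlinarith) (by positivity)

private lemma key_eq {N : ℝ} (hN : Real.exp 1 < N) :
    N * Real.log N * Real.exp (2 / Real.log N)
      = Real.exp (Real.log N + Real.log (Real.log N) + 2 / Real.log N) := by
  have hN0 : 0 < N := lt_trans (Real.exp_pos 1) hN
  have h1 : 1 < Real.log N := (Real.lt_log_iff_exp_lt hN0).2 hN
  rw [Real.exp_add, Real.exp_add, Real.exp_log hN0, Real.exp_log (by linarith)]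

/-- For every `k > e³`, the equation `N·log N·e^{2/log N} = k` has a unique solution
`N(k)` in `(e, ∞)`; setting `f(k)² := N(k)/(log N(k)·log k)`, one has
`lim_{k→∞} f(k)²·(log k)³/k = 1`.  (This is the Denjoy quasi-analytic majorant
`M(x) = (log x)^x`, for which `J(x) = log x`.) -/
theorem denjoy_N_unique_and_f_asymptotics (Nfun : ℝ → ℝ)
    (hN : ∀ k > Real.exp 3,
      Real.exp 1 < Nfun k ∧
        Nfun k * Real.log (Nfun k) * Real.exp (2 / Real.log (Nfun k)) = k) :
    (∀ k > Real.exp 3, ∃! N : ℝ,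
      N ∈ Set.Ioi (Real.exp 1) ∧ N * Real.log N * Real.exp (2 / Real.log N) = k) ∧
    Filter.Tendsto
      (fun k => Nfun k / (Real.log (Nfun k) * Real.log k) * (Real.log k) ^ 3 / k)
      Filter.atTop (nhds 1) := by
  -- strict monotonicity of g on Ioi (exp 1)
  have gmono : StrictMonoOn (fun N : ℝ => N * Real.log N * Real.exp (2 / Real.log N))
      (Set.Ioi (Real.exp 1)) := by
    intro a ha b hb hab
    have ha' : Real.exp 1 < a := ha
    have hb' : Real.exp 1 < b := hb
    simp only []
    rw [key_eq ha', key_eq hb']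
    apply Real.exp_lt_exp.2
    have hla : 1 < Real.log a := (Real.lt_log_iff_exp_lt (lt_trans (Real.exp_pos 1) ha')).2 ha'
    have hlb : 1 < Real.log b := (Real.lt_log_iff_exp_lt (lt_trans (Real.exp_pos 1) hb')).2 hb'
    exact hfun_mono hla.le hlb.le
      (Real.log_lt_log (lt_trans (Real.exp_pos 1) ha') hab)
  constructor
  · intro k hk
    obtain ⟨h1, h2⟩ := hN k hk
    refine ⟨Nfun k, ⟨h1, h2⟩, ?_⟩
    rintro N ⟨hN1, hN2⟩
    rcases lt_trichotomy N (Nfun k) with h | h | h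
    · exact absurd (gmono hN1 h1 h) (by simp [hN2, h2])
    · exact h
    · exact absurd (gmono h1 hN1 h) (by simp [hN2, h2])
  · -- Nfun → atTop
    have hNtop : Tendsto Nfun atTop atTop := by
      rw [tendsto_atTop]
      intro C
      set C' : ℝ := max C (Real.exp 1 + 1) with hC'
      have hC'e : Real.exp 1 < C' := lt_of_lt_of_le (by linarith) (le_max_right _ _)
      filter_upwards [eventually_gt_atTop (max (Real.exp 3)
        (C' * Real.log C' * Real.exp (2 / Real.log C')))] with k hk
      have hk3 : k > Real.exp 3 := lt_of_le_of_lt (le_max_left _ _) hk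
      obtain ⟨h1, h2⟩ := hN k hk3
      by_contra hle
      push_neg at hle
      have hlt : Nfun k < C' := lt_of_lt_of_le hle (le_max_left _ _)
      have := gmono h1 hC'e hlt
      simp only [h2] at this
      exact absurd (lt_of_le_of_lt (le_max_right _ _) hk) (not_lt.2 this.le)
    have hutop : Tendsto (fun k => Real.log (Nfun k)) atTop atTop :=
      Real.tendsto_log_atTop.comp hNtop
    -- the limit function
    have hG : Tendsto (fun t : ℝ => (1 + Real.log t / t + 2 / t^2)^2 *
        Real.exp (-(2 / t))) atTop (nhds 1) := by
      have h1 : Tendsto (fun t : ℝ => Real.log t / t) atTop (nhds 0) :=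
        Real.isLittleO_log_id_atTop.tendsto_div_nhds_zero
      have h2 : Tendsto (fun t : ℝ => 2 / t^2) atTop (nhds 0) :=
        tendsto_const_nhds.div_atTop (tendsto_pow_atTop two_ne_zero)
      have h3 : Tendsto (fun t : ℝ => Real.exp (-(2 / t))) atTop (nhds 1) := by
        have : Tendsto (fun t : ℝ => -(2 / t)) atTop (nhds 0) := by
          simpa using ((tendsto_const_nhds (α := ℝ) (x := (2:ℝ))).div_atTop tendsto_id).neg
        simpa [Function.comp_def] using (Real.continuous_exp.tendsto 0).comp this
      have h4 : Tendsto (fun t : ℝ => (1 + Real.log t / t + 2 / t^2)^2) atTop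
          (nhds 1) := by
        have := (((tendsto_const_nhds (x := (1:ℝ))).add h1).add h2).pow 2
        norm_num at this
        exact this
      simpa using h4.mul h3
    have heq : (fun k => Nfun k / (Real.log (Nfun k) * Real.log k) * (Real.log k) ^ 3 / k)
        =ᶠ[atTop] fun k =>
          (1 + Real.log (Real.log (Nfun k)) / Real.log (Nfun k)
            + 2 / (Real.log (Nfun k))^2)^2 * Real.exp (-(2 / Real.log (Nfun k))) := by
      filter_upwards [eventually_gt_atTop (Real.exp 3)] with k hk
      obtain ⟨h1, h2⟩ := hN k hk
      set N := Nfun k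
      set u := Real.log N with hu
      have hN0 : 0 < N := lt_trans (Real.exp_pos 1) h1
      have hu1 : 1 < u := (Real.lt_log_iff_exp_lt hN0).2 h1
      have hu0 : 0 < u := by linarith
      have hlogk : Real.log k = u + Real.log u + 2 / u := by
        rw [← h2, key_eq h1, Real.log_exp]
      have hk' : k = N * u * Real.exp (2 / u) := h2.symm
      have hlogu : 0 < Real.log u := Real.log_pos hu1
      have hL : 0 < u + Real.log u + 2 / u := by positivity
      rw [hlogk, hk', Real.exp_neg]
      field_simp
    exact (hG.comp hutop).congr' heq.symm
end

section
/- Let n ≥ 1, A > 0, and let N ≥ 3 be an integer. Let M be a positive function defined on the positive integers satisfying M(m)^{1/m} ≤ M(N)^{1/N} for every integer 1 ≤ m ≤ N. Let (c_α) be complex numbers indexed by multi-indices α ∈ ℤ_{≥0}^{2n} with 3 ≤ |α| ≤ N, satisfying |c_α| ≤ A^{|α|−2}·M(|α|−2). Then there exists a constant C depending only on n such that for every ε ∈ (0, 1/(16A)], every r ∈ (0, ε·M(N)^{−1/N}], the polynomial p(v) = Σ_{3 ≤ |α| ≤ N} c_α·r^{|α|−2}·v^α in 2n variables satisfies |D^β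 p(v)| ≤ C·A·ε for every multi-index β with |β| ≤ 2 and every v ∈ ℂ^{2n} with |v_i| ≤ 2 for all i. -/
private lemma aux_nat_sq (j : ℕ) : (j + 3) ^ 2 ≤ 64 * 4 ^ j := by
  have h1 : j < 2 ^ j := Nat.lt_two_pow_self
  have h2 : j + 3 ≤ 4 * 2 ^ j := by
    have : 1 ≤ 2 ^ j := Nat.one_le_two_pow
    omega
  have h4 : 4 ^ j = 2 ^ j * 2 ^ j := by rw [show (4:ℕ) = 2 * 2 from rfl, mul_pow]
  calc (j + 3) ^ 2 ≤ (4 * 2 ^ j) ^ 2 := Nat.pow_le_pow_left h2 2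
    _ = 16 * (2 ^ j * 2 ^ j) := by ring
    _ = 16 * 4 ^ j := by rw [← h4]
    _ ≤ 64 * 4 ^ j := Nat.mul_le_mul_right _ (by norm_num)

private lemma aux_scalar (x : ℝ) (hx : 0 < x) (hx16 : x ≤ 1/16) (k : ℕ) (hk : 3 ≤ k) :
    x ^ (k - 2) * (k : ℝ) ^ 2 * 2 ^ k ≤ x * 4096 * (1/2) ^ k := by
  obtain ⟨j, rfl⟩ := Nat.exists_eq_add_of_le hk
  have hk2 : 3 + j - 2 = j + 1 := by omega
  rw [hk2]
  have hxj : x ^ (j + 1) ≤ x * (1/16) ^ j := by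
    rw [pow_succ, mul_comm]
    exact mul_le_mul_of_nonneg_left (pow_le_pow_left₀ hx.le hx16 j) hx.le
  have hsq : ((3 + j : ℕ) : ℝ) ^ 2 ≤ 64 * 4 ^ j := by
    have := aux_nat_sq j
    have hcast : (((j + 3) ^ 2 : ℕ) : ℝ) ≤ ((64 * 4 ^ j : ℕ) : ℝ) := by exact_mod_cast this
    push_cast at hcast
    convert hcast using 2
    push_cast; ring
  calc x ^ (j + 1) * ((3 + j : ℕ) : ℝ) ^ 2 * 2 ^ (3 + j)
      ≤ (x * (1/16) ^ j) * (64 * 4 ^ j) * 2 ^ (3 + j) := by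
        apply mul_le_mul_of_nonneg_right _ (by positivity)
        apply mul_le_mul hxj hsq (by positivity) (by positivity)
    _ = x * (512 * ((1/16 : ℝ) * 4 * 2) ^ j) := by
        rw [pow_add, mul_pow, mul_pow]; ring
    _ = x * 4096 * (1/2) ^ (3 + j) := by
        rw [pow_add]; norm_num; ring

/-- Let `n ≥ 1`, `A > 0`, `N ≥ 3`, and let `M` be positive on positive integers with
`M(m)^{1/m} ≤ M(N)^{1/N}` for `1 ≤ m ≤ N`.  Let `(c_α)` be complex numbers indexed by
multi-indices `α ∈ ℤ_{≥0}^{2n}` with `3 ≤ |α| ≤ N`, satisfying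
`|c_α| ≤ A^{|α|−2}·M(|α|−2)`.  Then there is a constant `C` depending only on `n` such
that for every `ε ∈ (0, 1/(16A)]` and every `r ∈ (0, ε·M(N)^{−1/N}]`, the polynomial
`p(v) = Σ_{3 ≤ |α| ≤ N} c_α·r^{|α|−2}·v^α` satisfies `|D^β p(v)| ≤ C·A·ε` for every
multi-index `β` with `|β| ≤ 2` and every `v ∈ ℂ^{2n}` with `|v_i| ≤ 2`.  (The formal
derivative `D^β p` is written out explicitly via descending factorials.) -/
theorem taylor_tail_C2_bound (n : ℕ) (hn : 1 ≤ n) :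
    ∃ C > (0 : ℝ),
      ∀ (A : ℝ), 0 < A →
      ∀ (N : ℕ), 3 ≤ N →
      ∀ (M : ℕ → ℝ), (∀ m : ℕ, 1 ≤ m → 0 < M m) →
      (∀ m : ℕ, 1 ≤ m → m ≤ N → (M m) ^ (1 / (m : ℝ)) ≤ (M N) ^ (1 / (N : ℝ))) →
      ∀ (c : (Fin (2 * n) → ℕ) → ℂ),
      (∀ α : Fin (2 * n) → ℕ, 3 ≤ ∑ i, α i → ∑ i, α i ≤ N →
        ‖c α‖ ≤ A ^ ((∑ i, α i) - 2) * M ((∑ i, α i) - 2)) →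
      ∀ ε : ℝ, 0 < ε → ε ≤ 1 / (16 * A) →
      ∀ r : ℝ, 0 < r → r ≤ ε * (M N) ^ (-(1 / (N : ℝ))) →
      ∀ β : Fin (2 * n) → ℕ, (∑ i, β i) ≤ 2 →
      ∀ v : Fin (2 * n) → ℂ, (∀ i, ‖v i‖ ≤ 2) →
      ‖(∑ α ∈ (Fintype.piFinset fun _ : Fin (2 * n) => Finset.range (N + 1)) |>.filter
            (fun α => 3 ≤ ∑ i, α i ∧ ∑ i, α i ≤ N),
          if ∀ i, β i ≤ α i then
            c α * (r : ℂ) ^ ((∑ i, α i) - 2) *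
              (∏ i, (Nat.descFactorial (α i) (β i) : ℂ)) *
              ∏ i, (v i) ^ (α i - β i)
          else 0)‖ ≤ C * A * ε := by
  refine ⟨4096 * 2 ^ (2 * n), by positivity, ?_⟩
  intro A hA N hN M hM hMN c hc ε hε hεA r hr hrε β hβ v hv
  have hMNpos : 0 < M N := hM N (by omega)
  set t : ℝ := (M N) ^ ((1 : ℝ) / (N : ℝ)) with ht
  have htpos : 0 < t := Real.rpow_pos_of_pos hMNpos _
  have hrb : r ≤ ε * t⁻¹ := by
    rwa [ht, ← Real.rpow_neg hMNpos.le]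
  have hAε : A * ε ≤ 1 / 16 := by
    rw [le_div_iff₀ (by norm_num : (0:ℝ) < 16)] at *
    calc A * ε * 16 = 16 * A * ε := by ring
      _ ≤ 16 * A * (1 / (16 * A)) := by
          apply mul_le_mul_of_nonneg_left hεA (by positivity)
      _ = 1 := by field_simp
  have hAεpos : 0 < A * ε := mul_pos hA hε
  set S := (Fintype.piFinset fun _ : Fin (2 * n) => Finset.range (N + 1)) |>.filter
      (fun α => 3 ≤ ∑ i, α i ∧ ∑ i, α i ≤ N) with hS
  have key : ∀ α ∈ S,
      ‖(if ∀ i, β i ≤ α i then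
            c α * (r : ℂ) ^ ((∑ i, α i) - 2) *
              (∏ i, (Nat.descFactorial (α i) (β i) : ℂ)) *
              ∏ i, (v i) ^ (α i - β i)
          else 0)‖ ≤ A * ε * 4096 * ∏ i, ((1:ℝ)/2) ^ (α i) := by
    intro α hα
    rw [hS, Finset.mem_filter] at hα
    obtain ⟨-, h3, hNle⟩ := hα
    set k := ∑ i, α i with hk
    have hk3 : 3 ≤ k := h3
    have hm1 : 1 ≤ k - 2 := by omega
    split_ifs with hβα
    · -- main estimate
      have hMk : M (k - 2) ≤ t ^ (k - 2) := by
        have hle := hMN (k - 2) hm1 (by omega)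
        have h0 : (0:ℝ) < M (k - 2) := hM _ hm1
        have e1 : ((M (k - 2)) ^ ((1:ℝ)/((k - 2 : ℕ) : ℝ))) ^ (k - 2) = M (k - 2) := by
          rw [← Real.rpow_natCast ((M (k - 2)) ^ ((1:ℝ)/((k - 2 : ℕ) : ℝ))) (k - 2),
            ← Real.rpow_mul h0.le, one_div, inv_mul_cancel₀, Real.rpow_one]
          exact_mod_cast (by omega : (k - 2 : ℕ) ≠ 0)
        calc M (k - 2) = ((M (k - 2)) ^ ((1:ℝ)/((k - 2 : ℕ) : ℝ))) ^ (k - 2) := e1.symm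
          _ ≤ t ^ (k - 2) := pow_le_pow_left₀ (Real.rpow_nonneg h0.le _) hle _
      have hcb : ‖c α‖ ≤ A ^ (k - 2) * t ^ (k - 2) :=
        (hc α h3 hNle).trans (mul_le_mul_of_nonneg_left hMk (pow_nonneg hA.le _))
      have h1 : ‖c α‖ * r ^ (k - 2) ≤ (A * ε) ^ (k - 2) := by
        calc ‖c α‖ * r ^ (k - 2)
            ≤ (A ^ (k - 2) * t ^ (k - 2)) * (ε * t⁻¹) ^ (k - 2) := by
              apply mul_le_mul hcb (pow_le_pow_left₀ hr.le hrb _) (by positivity) (by positivity)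
          _ = (A * ε) ^ (k - 2) := by
              rw [mul_pow, mul_pow, inv_pow]
              field_simp
      have h2 : (∏ i, ((Nat.descFactorial (α i) (β i) : ℝ))) ≤ (k : ℝ) ^ 2 := by
        have hnat : (∏ i, Nat.descFactorial (α i) (β i)) ≤ k ^ 2 := by
          calc ∏ i, Nat.descFactorial (α i) (β i)
              ≤ ∏ i, (α i) ^ (β i) :=
                Finset.prod_le_prod' fun i _ => Nat.descFactorial_le_pow _ _
            _ ≤ ∏ i, k ^ (β i) := by
                apply Finset.prod_le_prod' fun i _ => ?_
                exact Nat.pow_le_pow_left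
                  (Finset.single_le_sum (fun j _ => Nat.zero_le _) (Finset.mem_univ i)) _
            _ = k ^ (∑ i, β i) := Finset.prod_pow_eq_pow_sum _ _ _
            _ ≤ k ^ 2 := Nat.pow_le_pow_right (by omega) hβ
        calc (∏ i, ((Nat.descFactorial (α i) (β i) : ℝ)))
            = ((∏ i, Nat.descFactorial (α i) (β i) : ℕ) : ℝ) := by push_cast; rfl
          _ ≤ ((k ^ 2 : ℕ) : ℝ) := by exact_mod_cast hnat
          _ = (k : ℝ) ^ 2 := by push_cast; rfl
      have h3' : (∏ i, ‖v i‖ ^ (α i - β i)) ≤ (2 : ℝ) ^ k := by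
        calc ∏ i, ‖v i‖ ^ (α i - β i)
            ≤ ∏ i, (2 : ℝ) ^ (α i - β i) := by
              apply Finset.prod_le_prod (fun i _ => by positivity)
                (fun i _ => pow_le_pow_left₀ (norm_nonneg _) (hv i) _)
          _ ≤ ∏ i, (2 : ℝ) ^ (α i) := by
              apply Finset.prod_le_prod (fun i _ => by positivity)
                (fun i _ => pow_le_pow_right₀ (by norm_num) (Nat.sub_le _ _))
          _ = (2 : ℝ) ^ k := Finset.prod_pow_eq_pow_sum _ _ _
      have habs : ‖c α * (r : ℂ) ^ (k - 2) *
            (∏ i, (Nat.descFactorial (α i) (β i) : ℂ)) * ∏ i, (v i) ^ (α i - β i)‖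
          = ‖c α‖ * r ^ (k - 2) *
            (∏ i, ((Nat.descFactorial (α i) (β i) : ℝ))) *
            ∏ i, ‖v i‖ ^ (α i - β i) := by
        rw [norm_mul, norm_mul, norm_mul, norm_prod, norm_prod]
        simp [norm_pow, abs_of_pos hr]
      rw [habs]
      have hfin : (∏ i, ((1:ℝ)/2) ^ (α i)) = ((1:ℝ)/2) ^ k :=
        Finset.prod_pow_eq_pow_sum _ _ _
      rw [hfin]
      calc ‖c α‖ * r ^ (k - 2) *
            (∏ i, ((Nat.descFactorial (α i) (β i) : ℝ))) *
            ∏ i, ‖v i‖ ^ (α i - β i)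
          ≤ (A * ε) ^ (k - 2) * (k : ℝ) ^ 2 * (2 : ℝ) ^ k := by
            apply mul_le_mul _ h3' (Finset.prod_nonneg fun i _ => by positivity) (by positivity)
            apply mul_le_mul h1 h2 (Finset.prod_nonneg fun i _ => by positivity) (by positivity)
        _ ≤ A * ε * 4096 * (1/2) ^ k := aux_scalar _ hAεpos hAε k hk3
    · simp only [norm_zero]
      positivity
  calc ‖(∑ α ∈ S, if ∀ i, β i ≤ α i then
            c α * (r : ℂ) ^ ((∑ i, α i) - 2) *
              (∏ i, (Nat.descFactorial (α i) (β i) : ℂ)) *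
              ∏ i, (v i) ^ (α i - β i)
          else 0)‖
      ≤ ∑ α ∈ S, ‖(if ∀ i, β i ≤ α i then
            c α * (r : ℂ) ^ ((∑ i, α i) - 2) *
              (∏ i, (Nat.descFactorial (α i) (β i) : ℂ)) *
              ∏ i, (v i) ^ (α i - β i)
          else 0)‖ := norm_sum_le _ _
    _ ≤ ∑ α ∈ S, A * ε * 4096 * ∏ i, ((1:ℝ)/2) ^ (α i) := Finset.sum_le_sum key
    _ ≤ ∑ α ∈ (Fintype.piFinset fun _ : Fin (2 * n) => Finset.range (N + 1)),
          A * ε * 4096 * ∏ i, ((1:ℝ)/2) ^ (α i) := by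
        apply Finset.sum_le_sum_of_subset_of_nonneg (Finset.filter_subset _ _)
        intro α _ _
        positivity
    _ = A * ε * 4096 * ∑ α ∈ (Fintype.piFinset fun _ : Fin (2 * n) => Finset.range (N + 1)),
          ∏ i, ((1:ℝ)/2) ^ (α i) := by rw [Finset.mul_sum]
    _ = A * ε * 4096 * ∏ _i : Fin (2 * n), ∑ a ∈ Finset.range (N + 1), ((1:ℝ)/2) ^ a := by
        rw [Finset.prod_univ_sum]
    _ ≤ A * ε * 4096 * ∏ _i : Fin (2 * n), (2:ℝ) := by
        apply mul_le_mul_of_nonneg_left _ (by positivity)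
        apply Finset.prod_le_prod (fun i _ => by positivity)
          (fun i _ => sum_geometric_two_le _)
    _ = 4096 * 2 ^ (2 * n) * A * ε := by
        rw [Finset.prod_const, Finset.card_univ, Fintype.card_fin]
        ring
end

section
/- Let n ≥ 1, A > 0, B > 0, and let N ≥ 3 be an integer. Let M be a positive function defined on the positive integers satisfying M(m)^{1/m} ≤ M(N)^{1/N} for every integer 1 ≤ m ≤ N. Let (c_α) be complex numbers indexed by multi-indices α ∈ ℤ_{≥0}^{2n} with 2 ≤ |α| ≤ N, satisfying |c_α| ≤ A^{|α|−2}·M(|α|−2) for 3 ≤ |α| ≤ N and |c_α| ≤ B for |α| = 2. Then there exists a constant C depending only on n such that for every ε ∈ (0, 1/(8A)], every r ∈ (0, ε·M(N)^{−1/N}], the polynomial p(v) = Σ_{2 ≤ |α| ≤ N} c_α·r^{|α|−2}·v^α in 2n variables satisfies |D^β p(v)|/β! ≤ C·(B + 1) for every multi-index β ∈ ℤ_{≥0}^{2n} and every v ∈ ℂ^{2n} with |v_i| ≤ 1 for all i. -/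
lemma aux_choose_le (nn k : ℕ) : nn.choose k ≤ 2 ^ nn := by
  rcases le_or_gt k nn with h | h
  · calc nn.choose k ≤ ∑ m ∈ Finset.range (nn+1), nn.choose m :=
        Finset.single_le_sum (fun i _ => Nat.zero_le _) (Finset.mem_range.2 (by omega))
    _ = 2 ^ nn := Nat.sum_range_choose nn
  · rw [Nat.choose_eq_zero_of_lt h]; positivity

lemma aux_rpow (M : ℕ → ℝ) (N k : ℕ) (hMN : 0 < M N) (hMk : 0 < M k)
    (hk : 1 ≤ k) (hN : 1 ≤ N)
    (h : M k ^ (1 / (k : ℝ)) ≤ M N ^ (1 / (N : ℝ))) :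
    M k * (M N ^ (-(1 / (N : ℝ)))) ^ k ≤ 1 := by
  have hk0 : (k : ℝ) ≠ 0 := Nat.cast_ne_zero.2 (by omega)
  have h1 : M k ≤ M N ^ ((k : ℝ) / N) := by
    have h2 := Real.rpow_le_rpow (Real.rpow_pos_of_pos hMk _).le h (Nat.cast_nonneg k)
    rwa [← Real.rpow_mul hMk.le, one_div, inv_mul_cancel₀ hk0, Real.rpow_one,
      ← Real.rpow_mul hMN.le, one_div, inv_mul_eq_div] at h2
  have h3 : (M N ^ (-(1 / (N : ℝ)))) ^ k = M N ^ (-((k : ℝ) / N)) := by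
    rw [← Real.rpow_natCast (M N ^ (-(1/(N:ℝ)))) k, ← Real.rpow_mul hMN.le]
    ring_nf
  rw [h3]
  have h4 : (0:ℝ) < M N ^ (-((k : ℝ) / N)) := Real.rpow_pos_of_pos hMN _
  calc M k * M N ^ (-((k : ℝ) / N)) ≤ M N ^ ((k : ℝ) / N) * M N ^ (-((k : ℝ) / N)) :=
        mul_le_mul_of_nonneg_right h1 h4.le
    _ = 1 := by rw [← Real.rpow_add hMN]; simp

lemma aux_pow_eq (k : ℕ) : (1/8:ℝ) ^ k * (2:ℝ) ^ (k+2) = 64 * (1/4:ℝ) ^ (k+2) := by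
  have hmp : (1/8:ℝ)^k * (2:ℝ)^k = (1/4:ℝ)^k := by rw [← mul_pow]; norm_num
  calc (1/8:ℝ) ^ k * (2:ℝ) ^ (k+2) = ((1/8:ℝ)^k * (2:ℝ)^k) * 4 := by rw [pow_add]; ring
    _ = (1/4:ℝ)^k * 4 := by rw [hmp]
    _ = 64 * (1/4:ℝ) ^ (k+2) := by rw [pow_add]; ring

/-- Let `n ≥ 1`, `A, B > 0`, `N ≥ 3`, and let `M` be positive on positive integers with
`M(m)^{1/m} ≤ M(N)^{1/N}` for `1 ≤ m ≤ N`.  Let `(c_α)` be complex numbers indexed by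
multi-indices `α ∈ ℤ_{≥0}^{2n}` with `2 ≤ |α| ≤ N`, satisfying
`|c_α| ≤ A^{|α|−2}·M(|α|−2)` for `3 ≤ |α| ≤ N` and `|c_α| ≤ B` for `|α| = 2`.  Then
there is a constant `C` depending only on `n` such that for every `ε ∈ (0, 1/(8A)]` and
every `r ∈ (0, ε·M(N)^{−1/N}]`, the polynomial
`p(v) = Σ_{2 ≤ |α| ≤ N} c_α·r^{|α|−2}·v^α` satisfies `|D^β p(v)|/β! ≤ C·(B + 1)` for
every multi-index `β` and every `v ∈ ℂ^{2n}` with `|v_i| ≤ 1`.  (The formal derivative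
`D^β p` is written out explicitly via descending factorials.) -/
theorem taylor_polynomial_uniformly_analytic (n : ℕ) (hn : 1 ≤ n) :
    ∃ C > (0 : ℝ),
      ∀ (A B : ℝ), 0 < A → 0 < B →
      ∀ (N : ℕ), 3 ≤ N →
      ∀ (M : ℕ → ℝ), (∀ m : ℕ, 1 ≤ m → 0 < M m) →
      (∀ m : ℕ, 1 ≤ m → m ≤ N → (M m) ^ (1 / (m : ℝ)) ≤ (M N) ^ (1 / (N : ℝ))) →
      ∀ (c : (Fin (2 * n) → ℕ) → ℂ),
      (∀ α : Fin (2 * n) → ℕ, 3 ≤ ∑ i, α i → ∑ i, α i ≤ N →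
        ‖c α‖ ≤ A ^ ((∑ i, α i) - 2) * M ((∑ i, α i) - 2)) →
      (∀ α : Fin (2 * n) → ℕ, (∑ i, α i) = 2 → ‖c α‖ ≤ B) →
      ∀ ε : ℝ, 0 < ε → ε ≤ 1 / (8 * A) →
      ∀ r : ℝ, 0 < r → r ≤ ε * (M N) ^ (-(1 / (N : ℝ))) →
      ∀ β : Fin (2 * n) → ℕ,
      ∀ v : Fin (2 * n) → ℂ, (∀ i, ‖v i‖ ≤ 1) →
      ‖(∑ α ∈ (Fintype.piFinset fun _ : Fin (2 * n) => Finset.range (N + 1)) |>.filter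
            (fun α => 2 ≤ ∑ i, α i ∧ ∑ i, α i ≤ N),
          if ∀ i, β i ≤ α i then
            c α * (r : ℂ) ^ ((∑ i, α i) - 2) *
              (∏ i, (Nat.descFactorial (α i) (β i) : ℂ)) *
              ∏ i, (v i) ^ (α i - β i)
          else 0)‖ / (∏ i, (Nat.factorial (β i) : ℝ)) ≤ C * (B + 1) := by
  refine ⟨64 * 2 ^ (2 * n), by positivity, ?_⟩
  intro A B hA hB N hN M hM hmono c hc3 hc2 ε hε hεA r hr hrε β v hv
  have hKpos : (0:ℝ) < ∏ i, (Nat.factorial (β i) : ℝ) := by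
    apply Finset.prod_pos; intro i _; exact_mod_cast Nat.factorial_pos _
  rw [div_le_iff₀ hKpos]
  have hMN : 0 < M N := hM N (by omega)
  have hB1 : (0:ℝ) < B + 1 := by linarith
  set K : ℝ := ∏ i, (Nat.factorial (β i) : ℝ)
  set S := (Fintype.piFinset fun _ : Fin (2 * n) => Finset.range (N + 1)).filter
      (fun α => 2 ≤ ∑ i, α i ∧ ∑ i, α i ≤ N) with hS
  have keypos : ∀ α : Fin (2 * n) → ℕ,
      (0:ℝ) ≤ 64 * (B + 1) * (1/4 : ℝ) ^ (∑ i, α i) * K :=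
    fun α => mul_nonneg (mul_nonneg (mul_nonneg (by norm_num) hB1.le)
      (pow_nonneg (by norm_num) _)) hKpos.le
  -- per-term bound
  have key : ∀ α ∈ S, ‖
      (if ∀ i, β i ≤ α i then
            c α * (r : ℂ) ^ ((∑ i, α i) - 2) *
              (∏ i, (Nat.descFactorial (α i) (β i) : ℂ)) *
              ∏ i, (v i) ^ (α i - β i)
          else 0)‖ ≤ 64 * (B + 1) * (1/4 : ℝ) ^ (∑ i, α i) * K := by
    intro α hα
    by_cases hβα : ∀ i, β i ≤ α i
    · rw [if_pos hβα]
      simp only [hS, Finset.mem_filter] at hα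
      obtain ⟨-, h2m, hmN⟩ := hα
      set m := ∑ i, α i with hm
      have hdesc : ‖(∏ i, (Nat.descFactorial (α i) (β i) : ℂ))‖
          ≤ (2:ℝ) ^ m * K := by
        rw [norm_prod]
        simp only [Complex.norm_natCast]
        have hfac : ∀ i ∈ Finset.univ, (Nat.descFactorial (α i) (β i) : ℝ)
            ≤ (2:ℝ)^(α i) * (Nat.factorial (β i) : ℝ) := by
          intro i _
          rw [Nat.descFactorial_eq_factorial_mul_choose]
          push_cast
          rw [mul_comm]
          apply mul_le_mul_of_nonneg_right _ (Nat.cast_nonneg _)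
          exact_mod_cast aux_choose_le (α i) (β i)
        calc ∏ i, (Nat.descFactorial (α i) (β i) : ℝ)
            ≤ ∏ i, (2:ℝ)^(α i) * (Nat.factorial (β i) : ℝ) :=
              Finset.prod_le_prod (fun i _ => Nat.cast_nonneg _) hfac
          _ = (∏ i, (2:ℝ)^(α i)) * K := Finset.prod_mul_distrib
          _ = (2:ℝ) ^ m * K := by rw [Finset.prod_pow_eq_pow_sum]
      have hvle : ‖(∏ i, (v i) ^ (α i - β i))‖ ≤ 1 := by
        rw [norm_prod]
        calc ∏ i, ‖((v i) ^ (α i - β i))‖ ≤ ∏ i, (1:ℝ) := by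
              apply Finset.prod_le_prod (fun i _ => by positivity)
              intro i _
              rw [norm_pow]
              exact pow_le_one₀ (norm_nonneg _) (hv i)
          _ = 1 := by simp
      have hcr : ‖c α‖ * r ^ (m - 2) ≤ (B + 1) * (1/8 : ℝ) ^ (m - 2) := by
        rcases eq_or_lt_of_le h2m with h2 | h3
        · have he : m - 2 = 0 := by omega
          rw [he, pow_zero, pow_zero, mul_one, mul_one]
          exact le_trans (hc2 α h2.symm) (by linarith)
        · have h3m : 3 ≤ m := h3
          have hk1 : 1 ≤ m - 2 := by omega
          have hMk : 0 < M (m - 2) := hM _ hk1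
          have hrk : r ^ (m - 2) ≤ ε ^ (m-2) * (M N ^ (-(1 / (N : ℝ)))) ^ (m-2) := by
            rw [← mul_pow]
            exact pow_le_pow_left₀ hr.le hrε _
          have hAε : A * ε ≤ 1/8 := by
            rw [le_div_iff₀ (by norm_num : (0:ℝ) < 8)]
            rw [le_div_iff₀ (by positivity : (0:ℝ) < 8 * A)] at hεA
            linarith
          have hεM : (0:ℝ) ≤ ε ^ (m-2) * (M N ^ (-(1 / (N : ℝ)))) ^ (m-2) :=
            mul_nonneg (pow_nonneg hε.le _) (pow_nonneg (Real.rpow_pos_of_pos hMN _).le _)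
          calc ‖c α‖ * r ^ (m - 2)
              ≤ (A ^ (m-2) * M (m-2)) * (ε ^ (m-2) * (M N ^ (-(1 / (N : ℝ)))) ^ (m-2)) :=
                mul_le_mul (hc3 α h3m hmN) hrk (pow_nonneg hr.le _)
                  (mul_nonneg (pow_nonneg hA.le _) hMk.le)
            _ = (A * ε) ^ (m-2) * (M (m-2) * (M N ^ (-(1 / (N : ℝ)))) ^ (m-2)) := by
                rw [mul_pow]; ring
            _ ≤ (1/8:ℝ) ^ (m-2) * 1 :=
                mul_le_mul (pow_le_pow_left₀ (by positivity) hAε _)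
                  (aux_rpow M N (m-2) hMN hMk hk1 (by omega)
                    (hmono (m-2) hk1 (by omega)))
                  (mul_nonneg hMk.le (pow_nonneg (Real.rpow_pos_of_pos hMN _).le _))
                  (pow_nonneg (by norm_num) _)
            _ ≤ (B + 1) * (1/8:ℝ) ^ (m-2) := by
                rw [mul_one]
                nlinarith [pow_pos (by norm_num : (0:ℝ) < 1/8) (m-2)]
      rw [norm_mul, norm_mul, norm_mul, norm_pow, Complex.norm_real, Real.norm_of_nonneg hr.le]
      have hmm : (1/8:ℝ) ^ (m-2) * (2:ℝ)^m = 64 * (1/4:ℝ)^m := by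
        obtain ⟨k, hk⟩ : ∃ k, m = k + 2 := ⟨m - 2, by omega⟩
        rw [hk]
        simpa using aux_pow_eq k
      calc ‖c α‖ * r ^ (m-2)
            * ‖(∏ i, (Nat.descFactorial (α i) (β i) : ℂ))‖
            * ‖(∏ i, (v i) ^ (α i - β i))‖
          ≤ ((B + 1) * (1/8:ℝ) ^ (m-2)) * ((2:ℝ)^m * K) * 1 := by
            apply mul_le_mul _ hvle (norm_nonneg _)
              (mul_nonneg (mul_nonneg hB1.le (pow_nonneg (by norm_num) _))
                (mul_nonneg (pow_nonneg (by norm_num) _) hKpos.le))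
            exact mul_le_mul hcr hdesc (norm_nonneg _)
              (mul_nonneg hB1.le (pow_nonneg (by norm_num) _))
        _ = (B+1) * ((1/8:ℝ) ^ (m-2) * (2:ℝ)^m) * K := by ring
        _ = 64 * (B + 1) * (1/4 : ℝ) ^ m * K := by rw [hmm]; ring
    · rw [if_neg hβα]
      simpa using keypos α
  calc ‖(∑ α ∈ S, if ∀ i, β i ≤ α i then
            c α * (r : ℂ) ^ ((∑ i, α i) - 2) *
              (∏ i, (Nat.descFactorial (α i) (β i) : ℂ)) *
              ∏ i, (v i) ^ (α i - β i)
          else 0)‖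
      ≤ ∑ α ∈ S, ‖(if ∀ i, β i ≤ α i then
            c α * (r : ℂ) ^ ((∑ i, α i) - 2) *
              (∏ i, (Nat.descFactorial (α i) (β i) : ℂ)) *
              ∏ i, (v i) ^ (α i - β i)
          else 0)‖ := norm_sum_le _ _
    _ ≤ ∑ α ∈ S, 64 * (B + 1) * (1/4 : ℝ) ^ (∑ i, α i) * K := Finset.sum_le_sum key
    _ ≤ ∑ α ∈ Fintype.piFinset (fun _ : Fin (2 * n) => Finset.range (N + 1)),
          64 * (B + 1) * (1/4 : ℝ) ^ (∑ i, α i) * K :=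
        Finset.sum_le_sum_of_subset_of_nonneg (Finset.filter_subset _ _)
          (fun α _ _ => keypos α)
    _ = (64 * (B + 1) * K) * ∑ α ∈ Fintype.piFinset (fun _ : Fin (2 * n) => Finset.range (N + 1)),
          ∏ i, (1/4 : ℝ) ^ (α i) := by
        rw [Finset.mul_sum]
        congr 1; ext α
        rw [Finset.prod_pow_eq_pow_sum]; ring
    _ = (64 * (B + 1) * K) * ∏ _i : Fin (2*n), ∑ k ∈ Finset.range (N+1), (1/4:ℝ)^k := by
        rw [Finset.prod_univ_sum]
    _ ≤ (64 * (B + 1) * K) * 2 ^ (2*n) := by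
        apply mul_le_mul_of_nonneg_left _
          (mul_nonneg (mul_nonneg (by norm_num) hB1.le) hKpos.le)
        have hgeom : ∑ k ∈ Finset.range (N+1), (1/4:ℝ)^k ≤ 2 := by
          have h4 : (1/4:ℝ) ≠ 1 := by norm_num
          rw [geom_sum_eq h4]
          have h0 : (0:ℝ) ≤ (1/4:ℝ)^(N+1) := by positivity
          have h1 : ((1/4:ℝ)^(N+1) - 1) / (1/4 - 1) = (1 - (1/4:ℝ)^(N+1)) * (4/3) := by
            ring
          rw [h1]; nlinarith
        calc ∏ _i : Fin (2*n), ∑ k ∈ Finset.range (N+1), (1/4:ℝ)^k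
            = (∑ k ∈ Finset.range (N+1), (1/4:ℝ)^k) ^ (2*n) := by
              rw [Finset.prod_const, Finset.card_univ, Fintype.card_fin]
          _ ≤ (2:ℝ) ^ (2*n) := pow_le_pow_left₀ (by positivity) hgeom _
    _ = 64 * 2 ^ (2*n) * (B + 1) * K := by ring
end
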